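/- arXiv:1911.07431 — 4 statements merged into one kernel-verified Lean document; each statement's English description precedes it below -/
import Mathlib

section
/- Let $k \ge 3$ and $l \in [k-1]$ be integers, and let $n, m$ be positive integers with $m \le n/(2k^4)$. If $H$ is a $k$-uniform hypergraph on $n$ vertices such that every $l$-subset of vertices is contained in more than $\binom{n-l}{k-l} - \binom{n-l-m}{k-l}$ edges, then $H$ has a matching of size at least $m+1$. -/
open Finset

/-- A set of edges is a matching if its members are pairwise disjoint. -/
def IsMatchingF {α : Type*} (M : Finset (Finset α)) : Prop :=
  ∀ e ∈ M, ∀ f ∈ M, e ≠ f → Disjoint e f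

/-- The degree of a vertex set `T`: the number of edges containing `T`. -/
def degF {α : Type*} [DecidableEq α] (E : Finset (Finset α)) (T : Finset α) : ℕ :=
  (E.filter (fun e => T ⊆ e)).card


lemma aux_choose_split (a u v : ℕ) :
    a.choose u * (a - u).choose v = a.choose (u + v) * (u + v).choose u := by
  rcases le_or_gt (u + v) a with h | h
  · have hu : u ≤ a := le_trans (Nat.le_add_right u v) h
    have hv : v ≤ a - u := by omega
    have huv : u ≤ u + v := Nat.le_add_right u v
    have e1 := Nat.choose_mul_factorial_mul_factorial hu
    have e2 := Nat.choose_mul_factorial_mul_factorial hv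
    have e3 := Nat.choose_mul_factorial_mul_factorial h
    have e4 := Nat.choose_mul_factorial_mul_factorial huv
    have h5 : a - u - v = a - (u + v) := by omega
    have h6 : u + v - u = v := by omega
    rw [h5] at e2
    rw [h6] at e4
    have hpos : 0 < u.factorial * v.factorial * (a - (u + v)).factorial := by positivity
    apply Nat.eq_of_mul_eq_mul_right hpos
    have L : a.choose u * (a - u).choose v * (u.factorial * v.factorial * (a - (u + v)).factorial)
        = a.factorial := by
      calc a.choose u * (a - u).choose v * (u.factorial * v.factorial * (a - (u + v)).factorial)
          = (a.choose u * u.factorial) *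
            ((a - u).choose v * v.factorial * (a - (u + v)).factorial) := by ring
        _ = (a.choose u * u.factorial) * (a - u).factorial := by rw [e2]
        _ = a.factorial := by rw [← e1]
    have R : a.choose (u + v) * (u + v).choose u *
        (u.factorial * v.factorial * (a - (u + v)).factorial) = a.factorial := by
      calc a.choose (u + v) * (u + v).choose u *
            (u.factorial * v.factorial * (a - (u + v)).factorial)
          = (a.choose (u + v) * ((u + v).choose u * u.factorial * v.factorial)) *
            (a - (u + v)).factorial := by ring
        _ = (a.choose (u + v) * (u + v).factorial) * (a - (u + v)).factorial := by rw [e4]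
        _ = a.factorial := by rw [← e3]
    rw [L, R]
  · have h1 : a.choose (u + v) = 0 := Nat.choose_eq_zero_of_lt h
    rcases le_or_gt u a with h2 | h2
    · have h3 : a - u < v := by omega
      rw [Nat.choose_eq_zero_of_lt h3, h1]
      simp
    · rw [Nat.choose_eq_zero_of_lt h2, h1]
      simp

lemma aux_sum_lb : ∀ (mq a j : ℕ), mq ≤ a →
    (a - mq).choose (j + 1) + mq * ((a - mq).choose j) ≤ a.choose (j + 1) := by
  intro mq
  induction mq with
  | zero => intro a j _; simp
  | succ p ih =>
    intro a j h
    have h1 : a - (p + 1) + 1 = a - p := by omega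
    have hp : (a - p).choose (j + 1) = (a - (p + 1)).choose j + (a - (p + 1)).choose (j + 1) := by
      rw [← h1, Nat.choose_succ_succ]
    have hmono : (a - (p + 1)).choose j ≤ (a - p).choose j := Nat.choose_le_choose j (by omega)
    have hih := ih a j (by omega)
    calc (a - (p + 1)).choose (j + 1) + (p + 1) * ((a - (p + 1)).choose j)
        = ((a - (p + 1)).choose j + (a - (p + 1)).choose (j + 1)) +
            p * ((a - (p + 1)).choose j) := by ring
      _ = (a - p).choose (j + 1) + p * ((a - (p + 1)).choose j) := by rw [hp]
      _ ≤ (a - p).choose (j + 1) + p * ((a - p).choose j) :=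
          Nat.add_le_add_left (Nat.mul_le_mul (le_refl p) hmono) _
      _ ≤ a.choose (j + 1) := hih

lemma aux_two1 : ∀ (d a j : ℕ), d ≤ a → 1 ≤ j →
    a.choose j ≤ (a - d).choose j + d * ((a - 1).choose (j - 1)) := by
  intro d
  induction d with
  | zero => intro a j _ _; simp
  | succ p ih =>
    intro a j hd hj
    have h1 := ih a j (by omega) hj
    have h2 : a - p = (a - (p + 1)) + 1 := by omega
    have hj1 : j - 1 + 1 = j := by omega
    have hp : (a - p).choose j = (a - (p + 1)).choose (j - 1) + (a - (p + 1)).choose j := by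
      have hcs := Nat.choose_succ_succ' (a - (p + 1)) (j - 1)
      rw [hj1] at hcs
      rw [h2, hcs]
    have hm : (a - (p + 1)).choose (j - 1) ≤ (a - 1).choose (j - 1) :=
      Nat.choose_le_choose _ (by omega)
    calc a.choose j ≤ (a - p).choose j + p * ((a - 1).choose (j - 1)) := h1
      _ = (a - (p + 1)).choose (j - 1) + (a - (p + 1)).choose j +
          p * ((a - 1).choose (j - 1)) := by rw [hp]
      _ ≤ (a - 1).choose (j - 1) + (a - (p + 1)).choose j + p * ((a - 1).choose (j - 1)) := by
          exact Nat.add_le_add_right (Nat.add_le_add_right hm _) _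
      _ = (a - (p + 1)).choose j + (p + 1) * ((a - 1).choose (j - 1)) := by ring

lemma aux_two (a d j : ℕ) (hj : 1 ≤ j) (h : 2 * (d * j) ≤ a) :
    a.choose j ≤ 2 * ((a - d).choose j) := by
  rcases Nat.eq_zero_or_pos a with ha | ha
  · have hd0 : d = 0 := by
      rcases Nat.eq_zero_or_pos d with h0 | h0
      · exact h0
      · exfalso; have : 1 ≤ d * j := Nat.mul_le_mul h0 hj; omega
    subst hd0; rw [Nat.sub_zero]; omega
  · have hdj : d ≤ d * j := by
      calc d = d * 1 := (mul_one d).symm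
        _ ≤ d * j := Nat.mul_le_mul (le_refl d) hj
    have hd : d ≤ a := by omega
    have h1 := aux_two1 d a j hd hj
    have h2 : a * ((a - 1).choose (j - 1)) = j * a.choose j := by
      have hs := Nat.add_one_mul_choose_eq (a - 1) (j - 1)
      have ha1 : a - 1 + 1 = a := by omega
      have hj1 : j - 1 + 1 = j := by omega
      rw [ha1, hj1] at hs
      rw [hs]; ring
    have h3 : a * a.choose j ≤ a * ((a - d).choose j) + d * j * a.choose j := by
      calc a * a.choose j
          ≤ a * ((a - d).choose j + d * ((a - 1).choose (j - 1))) :=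
            Nat.mul_le_mul (le_refl a) h1
        _ = a * ((a - d).choose j) + d * (a * ((a - 1).choose (j - 1))) := by ring
        _ = a * ((a - d).choose j) + d * (j * a.choose j) := by rw [h2]
        _ = a * ((a - d).choose j) + d * j * a.choose j := by ring
    set t := d * j with ht
    have h4 : (a - t) * a.choose j ≤ a * ((a - d).choose j) := by
      have e : (a - t) * a.choose j + t * a.choose j = a * a.choose j := by
        have : a - t + t = a := by omega
        calc (a - t) * a.choose j + t * a.choose j = (a - t + t) * a.choose j := by ring
          _ = a * a.choose j := by rw [this]
      omega
    have h5 : a * a.choose j ≤ a * (2 * ((a - d).choose j)) := by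
      have hle : a ≤ 2 * (a - t) := by omega
      calc a * a.choose j ≤ (2 * (a - t)) * a.choose j := Nat.mul_le_mul_right _ hle
        _ = 2 * ((a - t) * a.choose j) := by ring
        _ ≤ 2 * (a * ((a - d).choose j)) := Nat.mul_le_mul (le_refl 2) h4
        _ = a * (2 * ((a - d).choose j)) := by ring
    exact Nat.le_of_mul_le_mul_left h5 ha

lemma aux_key (k m N : ℕ) (hk : 3 ≤ k) (hm : 1 ≤ m) (hN : 2 * k ^ 4 * m ≤ N) :
    k ^ 3 * m * ((N - 2).choose (k - 2)) ≤ (N - m).choose (k - 1) := by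
  have p1 : 27 ≤ k ^ 3 := by
    calc (27 : ℕ) = 3 ^ 3 := by norm_num
      _ ≤ k ^ 3 := Nat.pow_le_pow_left hk 3
  have p2 : 27 * k ≤ k ^ 4 := by
    calc 27 * k ≤ k ^ 3 * k := Nat.mul_le_mul_right k p1
      _ = k ^ 4 := by ring
  have hNbig : 162 * m ≤ N := by
    calc 162 * m = 2 * 81 * m := by norm_num
      _ ≤ 2 * k ^ 4 * m := by
          have : (81 : ℕ) = 3 ^ 4 := by norm_num
          have h4 : 81 ≤ k ^ 4 := by rw [this]; exact Nat.pow_le_pow_left hk 4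
          exact Nat.mul_le_mul_right m (Nat.mul_le_mul_left 2 h4)
      _ ≤ N := hN
  have hm2 : m + 2 ≤ N := by nlinarith
  -- condition for aux_two
  have hc0 : 2 * ((m - 1) * (k - 2)) + 2 ≤ N := by
    have q1 : (m - 1) * (k - 2) ≤ m * k := Nat.mul_le_mul (by omega) (by omega)
    have q2 : 2 * (m * k) + 2 ≤ 2 * k ^ 4 * m := by
      have r1 : 27 * k * m ≤ k ^ 4 * m := Nat.mul_le_mul_right m p2
      have r2 : 1 ≤ m * k := by
        calc 1 = 1 * 1 := by norm_num
          _ ≤ m * k := Nat.mul_le_mul hm (by omega)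
      nlinarith
    nlinarith
  have hc1 : 2 * ((m - 1) * (k - 2)) ≤ N - 2 := by omega
  have htwo : (N - 2).choose (k - 2) ≤ 2 * ((N - 2 - (m - 1)).choose (k - 2)) :=
    aux_two (N - 2) (m - 1) (k - 2) (by omega) hc1
  have hidx : N - 2 - (m - 1) = N - m - 1 := by omega
  rw [hidx] at htwo
  have hB : (N - m) * ((N - m - 1).choose (k - 2)) = (k - 1) * ((N - m).choose (k - 1)) := by
    have hs := Nat.add_one_mul_choose_eq (N - m - 1) (k - 2)
    have h1 : N - m - 1 + 1 = N - m := by omega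
    have h2 : k - 2 + 1 = k - 1 := by omega
    rw [h1, h2] at hs
    rw [hs]; ring
  have hc2 : 2 * (k - 1) * k ^ 3 * m ≤ N - m := by
    have e1 : k - 1 + 1 = k := by omega
    have e2 : 2 * (k - 1) * k ^ 3 * m + 2 * k ^ 3 * m = 2 * k ^ 4 * m := by
      calc 2 * (k - 1) * k ^ 3 * m + 2 * k ^ 3 * m = 2 * ((k - 1) + 1) * k ^ 3 * m := by ring
        _ = 2 * k * k ^ 3 * m := by rw [e1]
        _ = 2 * k ^ 4 * m := by ring
    have e3 : m ≤ 2 * k ^ 3 * m := by nlinarith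
    omega
  have main : (2 * (k - 1)) * (k ^ 3 * m * ((N - 2).choose (k - 2))) ≤
      (2 * (k - 1)) * ((N - m).choose (k - 1)) := by
    calc (2 * (k - 1)) * (k ^ 3 * m * ((N - 2).choose (k - 2)))
        = (2 * (k - 1) * k ^ 3 * m) * ((N - 2).choose (k - 2)) := by ring
      _ ≤ (N - m) * ((N - 2).choose (k - 2)) := Nat.mul_le_mul_right _ hc2
      _ ≤ (N - m) * (2 * ((N - m - 1).choose (k - 2))) := Nat.mul_le_mul_left _ htwo
      _ = 2 * ((N - m) * ((N - m - 1).choose (k - 2))) := by ring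
      _ = 2 * ((k - 1) * ((N - m).choose (k - 1))) := by rw [hB]
      _ = (2 * (k - 1)) * ((N - m).choose (k - 1)) := by ring
  exact Nat.le_of_mul_le_mul_left main (by omega)

lemma aux_kl (k l : ℕ) (hk : 1 ≤ k) (hlk : l + 1 ≤ k) :
    k.choose l ≤ k * ((k - 1).choose l) := by
  have hs := Nat.add_one_mul_choose_eq (k - 1) l
  have h1 : k - 1 + 1 = k := by omega
  rw [h1] at hs
  -- hs : k * (k-1).choose l = k.choose (l+1) * (l+1)
  have hr := Nat.choose_succ_right_eq k l
  -- hr : k.choose (l+1) * (l+1) = k.choose l * (k - l)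
  have : k * ((k - 1).choose l) = k.choose l * (k - l) := by
    rw [hs]
    exact hr
  rw [this]
  have : 1 ≤ k - l := by omega
  calc k.choose l = k.choose l * 1 := by ring
    _ ≤ k.choose l * (k - l) := Nat.mul_le_mul_left _ this

lemma aux_MI (k l mc N : ℕ) (hk : 3 ≤ k) (hl : 1 ≤ l) (hlk : l + 1 ≤ k)
    (hm : 1 ≤ mc) (hN : 2 * k ^ 4 * mc ≤ N) :
    k.choose l * (k ^ 2 * mc * ((N - 2).choose (k - 2))) ≤
      N.choose l * ((N - l - mc).choose (k - l - 1)) := by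
  have hsplit := aux_choose_split (N - mc) l (k - 1 - l)
  have hidx1 : l + (k - 1 - l) = k - 1 := by omega
  rw [hidx1] at hsplit
  -- hsplit : (N-mc).choose l * (N - mc - l).choose (k-1-l) = (N-mc).choose (k-1) * (k-1).choose l
  have hkey := aux_key k mc N hk hm hN
  have hkl := aux_kl k l (by omega) hlk
  calc k.choose l * (k ^ 2 * mc * ((N - 2).choose (k - 2)))
      ≤ (k * ((k - 1).choose l)) * (k ^ 2 * mc * ((N - 2).choose (k - 2))) :=
        Nat.mul_le_mul_right _ hkl
    _ = (k - 1).choose l * (k * k ^ 2 * mc * ((N - 2).choose (k - 2))) := by ring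
    _ = (k - 1).choose l * (k ^ 3 * mc * ((N - 2).choose (k - 2))) := by ring_nf
    _ ≤ (k - 1).choose l * ((N - mc).choose (k - 1)) := Nat.mul_le_mul_left _ hkey
    _ = (N - mc).choose l * ((N - mc - l).choose (k - 1 - l)) := by rw [hsplit]; ring
    _ ≤ N.choose l * ((N - l - mc).choose (k - l - 1)) := by
        have g1 : (N - mc).choose l ≤ N.choose l := Nat.choose_le_choose l (by omega)
        have g2 : N - mc - l = N - l - mc := by omega
        have g3 : k - 1 - l = k - l - 1 := by omega
        rw [g2, g3]
        exact Nat.mul_le_mul_right _ g1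

lemma aux_degb {α : Type*} [DecidableEq α] (k : ℕ) (V : Finset α) (E : Finset (Finset α))
    (hEV : ∀ e ∈ E, e ⊆ V) (hEk : ∀ e ∈ E, e.card = k) (S : Finset α) (hSV : S ⊆ V) :
    (E.filter (fun e => S ⊆ e)).card ≤ (V.card - S.card).choose (k - S.card) := by
  have h1 : (E.filter (fun e => S ⊆ e)).card ≤ ((V \ S).powersetCard (k - S.card)).card := by
    apply Finset.card_le_card_of_injOn (fun e => e \ S)
    · intro e he
      rw [Finset.mem_coe, Finset.mem_filter] at he
      rw [Finset.mem_coe, Finset.mem_powersetCard]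
      constructor
      · exact Finset.sdiff_subset_sdiff (hEV e he.1) (le_refl S)
      · rw [Finset.card_sdiff_of_subset he.2, hEk e he.1]
    · intro e1 h1 e2 h2 heq
      simp only [Finset.coe_filter, Set.mem_setOf_eq] at h1 h2
      simp only at heq
      rw [← Finset.sdiff_union_of_subset h1.2, ← Finset.sdiff_union_of_subset h2.2, heq]
  rw [Finset.card_powersetCard, Finset.card_sdiff_of_subset hSV] at h1
  exact h1

lemma aux_dc {α : Type*} [DecidableEq α] (k l : ℕ) (V : Finset α) (E : Finset (Finset α))
    (hEV : ∀ e ∈ E, e ⊆ V) (hEk : ∀ e ∈ E, e.card = k) :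
    ∑ T ∈ V.powersetCard l, degF E T = E.card * k.choose l := by
  unfold degF
  simp_rw [Finset.card_filter]
  rw [Finset.sum_comm]
  have hper : ∀ e ∈ E, (∑ T ∈ V.powersetCard l, if T ⊆ e then 1 else 0) = k.choose l := by
    intro e he
    rw [← Finset.card_filter]
    have hfe : (V.powersetCard l).filter (fun T => T ⊆ e) = e.powersetCard l := by
      ext T
      simp only [Finset.mem_filter, Finset.mem_powersetCard]
      constructor
      · rintro ⟨⟨-, hc⟩, hTe⟩; exact ⟨hTe, hc⟩
      · rintro ⟨hTe, hc⟩; exact ⟨⟨hTe.trans (hEV e he), hc⟩, hTe⟩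
    rw [hfe, Finset.card_powersetCard, hEk e he]
  rw [Finset.sum_congr rfl hper, Finset.sum_const, smul_eq_mul, mul_comm]

theorem aux_general {α : Type*} [DecidableEq α] (k l : ℕ) (hk : 3 ≤ k) (hl : 1 ≤ l)
    (hlk : l + 1 ≤ k) :
    ∀ m : ℕ, ∀ V : Finset α, ∀ E : Finset (Finset α),
      (∀ e ∈ E, e ⊆ V) → (∀ e ∈ E, e.card = k) →
      2 * k ^ 4 * m ≤ V.card → l ≤ V.card →
      (∀ T ⊆ V, T.card = l →
        (V.card - l).choose (k - l) - (V.card - l - m).choose (k - l) < degF E T) →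
      ∃ M ⊆ E, IsMatchingF M ∧ M.card = m + 1 := by
  intro m
  induction m with
  | zero =>
    intro V E hEV hEk _ hlV hdeg
    obtain ⟨T, hTV, hTc⟩ := Finset.exists_subset_card_eq hlV
    have h0 := hdeg T hTV hTc
    simp only [Nat.sub_zero, Nat.sub_self] at h0
    have : 0 < degF E T := by omega
    rw [degF, Finset.card_pos] at this
    obtain ⟨e, he⟩ := this
    rw [Finset.mem_filter] at he
    refine ⟨{e}, by simpa using he.1, ?_, by simp⟩
    intro x hx y hy hxy
    rw [Finset.mem_singleton] at hx hy
    exact absurd (hx.trans hy.symm) hxy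
  | succ mm ih =>
    intro V E hEV hEk hNm hlV hdeg
    classical
    set N := V.card with hN
    -- basic numeric facts
    have hk4 : (81 : ℕ) ≤ k ^ 4 := by
      calc (81 : ℕ) = 3 ^ 4 := by norm_num
        _ ≤ k ^ 4 := Nat.pow_le_pow_left hk 4
    have hNlb : 162 * (mm + 1) ≤ N := by
      calc 162 * (mm + 1) = 2 * 81 * (mm + 1) := by norm_num
        _ ≤ 2 * k ^ 4 * (mm + 1) := Nat.mul_le_mul_right _ (Nat.mul_le_mul_left 2 hk4)
        _ ≤ N := hNm
    have hkN : k + mm + 10 ≤ N := by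
      have hA : 2 * k ^ 4 * (mm + 1) = 2 * (k ^ 4 * mm) + 2 * k ^ 4 := by ring
      have hB : k ≤ k ^ 4 := Nat.le_self_pow (by norm_num) k
      have hC : mm ≤ k ^ 4 * mm := Nat.le_mul_of_pos_left mm (by positivity)
      omega
    -- maximum matching
    obtain ⟨M, hMS, hMmax⟩ := Finset.exists_max_image
      ((E.powerset).filter (fun M => IsMatchingF M)) Finset.card
      ⟨∅, Finset.mem_filter.mpr ⟨Finset.empty_mem_powerset _, by simp [IsMatchingF]⟩⟩
    rw [Finset.mem_filter, Finset.mem_powerset] at hMS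
    obtain ⟨hME, hMmatch⟩ := hMS
    by_cases hbig : mm + 2 ≤ M.card
    · obtain ⟨M', hM'M, hM'c⟩ := Finset.exists_subset_card_eq hbig
      exact ⟨M', hM'M.trans hME, fun x hx y hy hxy => hMmatch x (hM'M hx) y (hM'M hy) hxy, hM'c⟩
    · have htle : M.card ≤ mm + 1 := by omega
      set W := M.biUnion id with hW
      have hWV : W ⊆ V := by
        intro x hx
        rw [hW, Finset.mem_biUnion] at hx
        obtain ⟨e, heM, hxe⟩ := hx
        exact hEV e (hME heM) hxe
      have hWcard : W.card ≤ k * (mm + 1) := by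
        calc W.card ≤ ∑ e ∈ M, (id e).card := Finset.card_biUnion_le
          _ = ∑ e ∈ M, k := by
              apply Finset.sum_congr rfl
              intro e he; simp [hEk e (hME he)]
          _ = M.card * k := by rw [Finset.sum_const, smul_eq_mul]
          _ ≤ (mm + 1) * k := Nat.mul_le_mul_right k htle
          _ = k * (mm + 1) := by ring
      -- every edge meets W
      have hmeet : ∀ e ∈ E, ∃ x, x ∈ e ∧ x ∈ W := by
        intro e he
        by_contra hcon
        push_neg at hcon
        have heM : e ∉ M := by
          intro heM
          have hsub : e ⊆ W := Finset.subset_biUnion_of_mem id heM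
          have : 0 < e.card := by rw [hEk e he]; omega
          obtain ⟨x, hx⟩ := Finset.card_pos.mp this
          exact hcon x hx (hsub hx)
        have hmatch' : IsMatchingF (insert e M) := by
          intro x hx y hy hxy
          rw [Finset.mem_insert] at hx hy
          rcases hx with rfl | hx
          · rcases hy with rfl | hy
            · exact absurd rfl hxy
            · rw [Finset.disjoint_left]
              intro a ha hay
              exact hcon a ha (Finset.mem_biUnion.mpr ⟨y, hy, hay⟩)
          · rcases hy with rfl | hy
            · rw [Finset.disjoint_right]
              intro a hay ha
              exact hcon a hay (Finset.mem_biUnion.mpr ⟨x, hx, ha⟩)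
            · exact hMmatch x hx y hy hxy
        have hmem : insert e M ∈ (E.powerset).filter (fun M => IsMatchingF M) := by
          rw [Finset.mem_filter, Finset.mem_powerset]
          exact ⟨Finset.insert_subset he hME, hmatch'⟩
        have := hMmax _ hmem
        rw [Finset.card_insert_of_notMem heM] at this
        omega
      -- lower bound on |E|
      set thr := (N - l).choose (k - l) - (N - l - (mm + 1)).choose (k - l) with hthr
      have hElb : N.choose l * (thr + 1) ≤ E.card * k.choose l := by
        rw [← aux_dc k l V E hEV hEk]
        calc N.choose l * (thr + 1) = ∑ _T ∈ V.powersetCard l, (thr + 1) := by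
              rw [Finset.sum_const, Finset.card_powersetCard, smul_eq_mul]
          _ ≤ ∑ T ∈ V.powersetCard l, degF E T := by
              apply Finset.sum_le_sum
              intro T hT
              rw [Finset.mem_powersetCard] at hT
              have := hdeg T hT.1 hT.2
              omega
      have hCNl_pos : 0 < N.choose l := Nat.choose_pos hlV
      have hCkl_pos : 0 < k.choose l := Nat.choose_pos (by omega)
      have hEpos : 0 < E.card := by
        by_contra hc
        push_neg at hc
        interval_cases h : E.card
        · simp [h] at hElb; omega
      -- W nonempty, pigeonhole vertex w
      have hWne : W.Nonempty := by
        obtain ⟨e, he⟩ := Finset.card_pos.mp hEpos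
        obtain ⟨x, _, hxW⟩ := hmeet e he
        exact ⟨x, hxW⟩
      obtain ⟨w, hwW, hwmax⟩ :=
        Finset.exists_max_image W (fun w' => (E.filter (fun e => w' ∈ e)).card) hWne
      set d := (E.filter (fun e => w ∈ e)).card with hd
      have hwV : w ∈ V := hWV hwW
      have hEleWd : E.card ≤ k * (mm + 1) * d := by
        have hcount : E.card ≤ ∑ w' ∈ W, (E.filter (fun e => w' ∈ e)).card := by
          calc E.card = ∑ _e ∈ E, 1 := by simp
            _ ≤ ∑ e ∈ E, (W.filter (fun w' => w' ∈ e)).card := by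
                apply Finset.sum_le_sum
                intro e he
                obtain ⟨x, hxe, hxW⟩ := hmeet e he
                exact Finset.card_pos.mpr ⟨x, Finset.mem_filter.mpr ⟨hxW, hxe⟩⟩
            _ = ∑ e ∈ E, ∑ w' ∈ W, (if w' ∈ e then 1 else 0) := by
                simp_rw [Finset.card_filter]
            _ = ∑ w' ∈ W, ∑ e ∈ E, (if w' ∈ e then 1 else 0) := Finset.sum_comm
            _ = ∑ w' ∈ W, (E.filter (fun e => w' ∈ e)).card := by
                simp_rw [Finset.card_filter]
        have hsum : ∑ w' ∈ W, (E.filter (fun e => w' ∈ e)).card ≤ W.card * d := by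
          calc ∑ w' ∈ W, (E.filter (fun e => w' ∈ e)).card ≤ ∑ _w' ∈ W, d :=
                Finset.sum_le_sum (fun w' hw' => hwmax w' hw')
            _ = W.card * d := by rw [Finset.sum_const, smul_eq_mul]
        calc E.card ≤ W.card * d := le_trans hcount hsum
          _ ≤ k * (mm + 1) * d := Nat.mul_le_mul_right d hWcard
      -- the key degree bound for w
      set X := (N - 2).choose (k - 2) with hX
      have hdbig : k * (mm + 1) * X < d := by
        set C1 := (N - l - (mm + 1)).choose (k - l - 1) with hC1
        have f3 : (mm + 1) * C1 ≤ thr := by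
          have hs := aux_sum_lb (mm + 1) (N - l) (k - l - 1) (by omega)
          have hj : k - l - 1 + 1 = k - l := by omega
          rw [hj, ← hC1] at hs
          omega
        have f4 := aux_MI k l (mm + 1) N hk hl hlk (by omega) hNm
        rw [← hC1, ← hX] at f4
        have hmain : (k.choose l * (k * (mm + 1))) * (k * (mm + 1) * X) <
            (k.choose l * (k * (mm + 1))) * d := by
          calc (k.choose l * (k * (mm + 1))) * (k * (mm + 1) * X)
              = (mm + 1) * (k.choose l * (k ^ 2 * (mm + 1) * X)) := by ring
            _ ≤ (mm + 1) * (N.choose l * C1) := Nat.mul_le_mul_left _ f4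
            _ = N.choose l * ((mm + 1) * C1) := by ring
            _ < N.choose l * (thr + 1) := by
                have hlt : (mm + 1) * C1 < thr + 1 := by omega
                exact mul_lt_mul_of_pos_left hlt hCNl_pos
            _ ≤ E.card * k.choose l := hElb
            _ ≤ (k * (mm + 1) * d) * k.choose l := Nat.mul_le_mul_right _ hEleWd
            _ = (k.choose l * (k * (mm + 1))) * d := by ring
        exact Nat.lt_of_mul_lt_mul_left hmain
      -- build child hypergraph
      set E' := E.filter (fun e => w ∉ e) with hE'
      have hE'E : E' ⊆ E := Finset.filter_subset _ _
      have hcard' : (V.erase w).card = N - 1 := by rw [Finset.card_erase_of_mem hwV]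
      have hEV' : ∀ e ∈ E', e ⊆ V.erase w := by
        intro e he
        rw [hE', Finset.mem_filter] at he
        exact Finset.subset_erase.mpr ⟨hEV e he.1, he.2⟩
      have hEk' : ∀ e ∈ E', e.card = k := fun e he => hEk e (hE'E he)
      have hNm' : 2 * k ^ 4 * mm ≤ (V.erase w).card := by
        rw [hcard']
        have e1 : 2 * k ^ 4 * (mm + 1) = 2 * k ^ 4 * mm + 2 * k ^ 4 := by ring
        have e2 : 2 * k ^ 4 * mm + 2 * k ^ 4 ≤ N := by rw [← e1]; exact hNm
        omega
      have hlV' : l ≤ (V.erase w).card := by rw [hcard']; omega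
      have hdeg' : ∀ T ⊆ V.erase w, T.card = l →
          ((V.erase w).card - l).choose (k - l) -
            ((V.erase w).card - l - mm).choose (k - l) < degF E' T := by
        intro T hT hTc
        rw [hcard']
        have hTV : T ⊆ V := hT.trans (Finset.erase_subset _ _)
        have hwT : w ∉ T := fun hmem => (Finset.mem_erase.mp (hT hmem)).1 rfl
        -- split degF E T
        have hsplit : degF E T =
            (E.filter (fun e => T ⊆ e ∧ w ∈ e)).card + degF E' T := by
          have h1 := Finset.card_filter_add_card_filter_not
            (s := E.filter (fun e => T ⊆ e)) (p := fun e => w ∈ e)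
          rw [Finset.filter_filter, Finset.filter_filter] at h1
          have h2 : degF E' T = (E.filter (fun e => T ⊆ e ∧ w ∉ e)).card := by
            rw [degF, hE', Finset.filter_filter]
            congr 1
            apply Finset.filter_congr
            intro e _
            constructor
            · rintro ⟨h3, h4⟩; exact ⟨h4, h3⟩
            · rintro ⟨h3, h4⟩; exact ⟨h4, h3⟩
          rw [degF, h2, ← h1]
        -- bound the w-part
        have hub : (E.filter (fun e => T ⊆ e ∧ w ∈ e)).card ≤ (N - l - 1).choose (k - l - 1) := by
          have heq : E.filter (fun e => T ⊆ e ∧ w ∈ e) =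
              E.filter (fun e => insert w T ⊆ e) := by
            apply Finset.filter_congr
            intro e _
            rw [Finset.insert_subset_iff]
            constructor
            · rintro ⟨h3, h4⟩; exact ⟨h4, h3⟩
            · rintro ⟨h3, h4⟩; exact ⟨h4, h3⟩
          rw [heq]
          have hSV : insert w T ⊆ V := Finset.insert_subset hwV hTV
          have hScard : (insert w T).card = l + 1 := by
            rw [Finset.card_insert_of_notMem hwT, hTc]
          have := aux_degb k V E hEV hEk (insert w T) hSV
          rw [hScard] at this
          have g1 : N - (l + 1) = N - l - 1 := by omega
          have g2 : k - (l + 1) = k - l - 1 := by omega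
          rw [g1, g2] at this
          exact this
        -- Pascal
        have hpas : (N - l).choose (k - l) =
            (N - l - 1).choose (k - l - 1) + (N - l - 1).choose (k - l) := by
          have g1 : N - l = (N - l - 1) + 1 := by omega
          have g2 : k - l = (k - l - 1) + 1 := by omega
          have h := Nat.choose_succ_succ' (N - l - 1) (k - l - 1)
          rw [← g1, ← g2] at h
          exact h
        have hmono2 : (N - l - (mm + 1)).choose (k - l) ≤ (N - l - 1).choose (k - l) :=
          Nat.choose_le_choose _ (by omega)
        have hdT := hdeg T hTV hTc
        have hidx : N - 1 - l = N - l - 1 := by omega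
        rw [hidx]
        rw [show N - l - 1 - mm = N - l - (mm + 1) from by omega]
        omega
      obtain ⟨M₀, hM₀E', hM₀match, hM₀card⟩ :=
        ih (V.erase w) E' hEV' hEk' hNm' hlV' hdeg'
      -- extension edge
      set W₀ := M₀.biUnion id with hW₀
      have hW₀V' : W₀ ⊆ V.erase w := by
        intro x hx
        rw [hW₀, Finset.mem_biUnion] at hx
        obtain ⟨e, heM, hxe⟩ := hx
        exact hEV' e (hM₀E' heM) hxe
      have hW₀card : W₀.card ≤ k * (mm + 1) := by
        calc W₀.card ≤ ∑ e ∈ M₀, (id e).card := Finset.card_biUnion_le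
          _ = ∑ e ∈ M₀, k := by
              apply Finset.sum_congr rfl
              intro e he; simp [hEk' e (hM₀E' he)]
          _ = M₀.card * k := by rw [Finset.sum_const, smul_eq_mul]
          _ = k * (mm + 1) := by rw [hM₀card]; ring
      -- count bad edges at w
      set A := E.filter (fun e => w ∈ e ∧ Disjoint e W₀) with hA
      have hAne : A.Nonempty := by
        set B := E.filter (fun e => w ∈ e ∧ ¬ Disjoint e W₀) with hB
        have hsplit2 : A.card + B.card = d := by
          have h1 := Finset.card_filter_add_card_filter_not
            (s := E.filter (fun e => w ∈ e)) (p := fun e => Disjoint e W₀)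
          rw [Finset.filter_filter, Finset.filter_filter] at h1
          rw [hA, hB, hd]
          exact h1
        have hBle : B.card ≤ k * (mm + 1) * X := by
          have hsub : B ⊆ W₀.biUnion (fun u => E.filter (fun e => w ∈ e ∧ u ∈ e)) := by
            intro e he
            rw [hB, Finset.mem_filter] at he
            obtain ⟨u, hue, huW₀⟩ := Finset.not_disjoint_iff.mp he.2.2
            exact Finset.mem_biUnion.mpr ⟨u, huW₀, Finset.mem_filter.mpr ⟨he.1, he.2.1, hue⟩⟩
          calc B.card ≤ (W₀.biUnion (fun u => E.filter (fun e => w ∈ e ∧ u ∈ e))).card :=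
                Finset.card_le_card hsub
            _ ≤ ∑ u ∈ W₀, (E.filter (fun e => w ∈ e ∧ u ∈ e)).card := Finset.card_biUnion_le
            _ ≤ ∑ _u ∈ W₀, X := by
                apply Finset.sum_le_sum
                intro u huW₀
                have hune : u ≠ w := (Finset.mem_erase.mp (hW₀V' huW₀)).1
                have huV : u ∈ V := (Finset.mem_erase.mp (hW₀V' huW₀)).2
                have heq : E.filter (fun e => w ∈ e ∧ u ∈ e) =
                    E.filter (fun e => ({w, u} : Finset α) ⊆ e) := by
                  apply Finset.filter_congr
                  intro e _
                  rw [Finset.insert_subset_iff, Finset.singleton_subset_iff]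
                rw [heq]
                have hSV : ({w, u} : Finset α) ⊆ V := by
                  rw [Finset.insert_subset_iff, Finset.singleton_subset_iff]
                  exact ⟨hwV, huV⟩
                have hScard : ({w, u} : Finset α).card = 2 := by
                  rw [Finset.card_insert_of_notMem (by simp [hune.symm]), Finset.card_singleton]
                have := aux_degb k V E hEV hEk {w, u} hSV
                rw [hScard] at this
                exact this
            _ = W₀.card * X := by rw [Finset.sum_const, smul_eq_mul]
            _ ≤ k * (mm + 1) * X := Nat.mul_le_mul_right X hW₀card
        rw [← Finset.card_pos]
        omega
      obtain ⟨estar, hestar⟩ := hAne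
      rw [hA, Finset.mem_filter] at hestar
      obtain ⟨hesE, hwes, hdisj⟩ := hestar
      -- final matching
      have hesM₀ : estar ∉ M₀ := by
        intro hmem
        have : estar ∈ E' := hM₀E' hmem
        rw [hE', Finset.mem_filter] at this
        exact this.2 hwes
      refine ⟨insert estar M₀, ?_, ?_, ?_⟩
      · exact Finset.insert_subset hesE (fun e he => hE'E (hM₀E' he))
      · intro x hx y hy hxy
        rw [Finset.mem_insert] at hx hy
        rcases hx with rfl | hx
        · rcases hy with rfl | hy
          · exact absurd rfl hxy
          · exact Finset.disjoint_of_subset_right (Finset.subset_biUnion_of_mem id hy) hdisj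
        · rcases hy with rfl | hy
          · exact (Finset.disjoint_of_subset_right (Finset.subset_biUnion_of_mem id hx)
              hdisj).symm
          · exact hM₀match x hx y hy hxy
      · rw [Finset.card_insert_of_notMem hesM₀, hM₀card]


theorem stmt0 (k l n m : ℕ) (hk : 3 ≤ k) (hl : 1 ≤ l) (hlk : l ≤ k - 1)
    (hm : 0 < m) (hmn : m ≤ n / (2 * k ^ 4))
    (E : Finset (Finset (Fin n))) (hunif : ∀ e ∈ E, e.card = k)
    (hdeg : ∀ T : Finset (Fin n), T.card = l →
      Nat.choose (n - l) (k - l) - Nat.choose (n - l - m) (k - l) < degF E T) :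
    ∃ M ⊆ E, IsMatchingF M ∧ M.card = m + 1 := by
  have hlk' : l + 1 ≤ k := by omega
  have hpos : 0 < 2 * k ^ 4 := by positivity
  have hmn' : 2 * k ^ 4 * m ≤ n := by
    have h := (Nat.le_div_iff_mul_le hpos).mp hmn
    calc 2 * k ^ 4 * m = m * (2 * k ^ 4) := by ring
      _ ≤ n := h
  have hcard : (Finset.univ : Finset (Fin n)).card = n := by simp
  have hln : l ≤ n := by
    have h1 : k ≤ k ^ 4 := Nat.le_self_pow (by norm_num) k
    have h2 : 2 * k ^ 4 * 1 ≤ 2 * k ^ 4 * m := Nat.mul_le_mul_left _ hm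
    have h3 : 2 * k ^ 4 * 1 = 2 * k ^ 4 := by ring
    omega
  obtain ⟨M, h1, h2, h3⟩ := aux_general k l hk hl hlk' m Finset.univ E
    (fun e _ => Finset.subset_univ e) hunif (by rw [hcard]; exact hmn') (by rw [hcard]; exact hln)
    (by intro T _ hTc; rw [hcard]; exact hdeg T hTc)
  exact ⟨M, h1, h2, h3⟩
end

section
/- Let $G$ be a stable graph on $[n]$ and let $W \subseteq [n]$ be a set attaining the Berge minimum, i.e., $\nu(G) = (n - c_o(G-W) + |W|)/2$, chosen with $|W|$ maximal. Then every component of $G - W$ has an odd number of vertices, and at most one component of $G - W$ has more than one vertex. -/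
open Finset

noncomputable def nuG {V : Type*} (G : SimpleGraph V) : ℕ :=
  sSup {r | ∃ M : G.Subgraph, M.IsMatching ∧ M.edgeSet.ncard = r}

/-- The number of odd connected components of `G - W`. -/
noncomputable def oddComp {V : Type*} (G : SimpleGraph V) (W : Finset V) : ℕ :=
  Nat.card {c : (G.induce ((↑W : Set V)ᶜ)).ConnectedComponent // Odd (Nat.card c.supp)}

/-- A graph on `[n]` is stable if `N(i) \ {j} ⊆ N(j) \ {i}` whenever `j < i`. -/
def StableG {n : ℕ} (G : SimpleGraph (Fin n)) : Prop :=
  ∀ i j : Fin n, j < i → ∀ x : Fin n, G.Adj i x → x ≠ j → G.Adj j x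

namespace StmtAux

open SimpleGraph

variable {α : Type*}

lemma supp_nonempty {K : SimpleGraph α} (c : K.ConnectedComponent) : c.supp.Nonempty := by
  refine c.ind fun v => ⟨v, ?_⟩
  rw [ConnectedComponent.mem_supp_iff]

lemma walk_mem {K : SimpleGraph α} {T : Set α}
    (hcl : ∀ ⦃x y : α⦄, x ∈ T → K.Adj x y → y ∈ T) :
    ∀ {x y : α}, K.Walk x y → x ∈ T → y ∈ T := by
  intro x y w
  induction w with
  | nil => exact id
  | cons h p ih => exact fun hx => ih (hcl hx h)

lemma supp_subset_of_closed {K : SimpleGraph α} {T : Set α}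
    (hcl : ∀ ⦃x y : α⦄, x ∈ T → K.Adj x y → y ∈ T) {x : α} (hx : x ∈ T) :
    (K.connectedComponentMk x).supp ⊆ T := by
  intro z hz
  rw [ConnectedComponent.mem_supp_iff] at hz
  obtain ⟨w⟩ := ConnectedComponent.exact hz.symm
  exact walk_mem hcl w hx

lemma exists_odd_component [Fintype α] [DecidableEq α] {K : SimpleGraph α}
    [DecidableRel K.Adj] {T : Set α} [DecidablePred (· ∈ T)]
    (hcl : ∀ ⦃x y : α⦄, x ∈ T → K.Adj x y → y ∈ T) (hodd : Odd (Nat.card T)) :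
    ∃ c : K.ConnectedComponent, c.supp ⊆ T ∧ Odd (Nat.card c.supp) := by
  classical
  have hT : T.toFinset = (Finset.univ.filter
      (fun c : K.ConnectedComponent => c.supp ⊆ T)).biUnion (fun c => c.supp.toFinset) := by
    ext x
    simp only [Set.mem_toFinset, Finset.mem_biUnion, Finset.mem_filter, Finset.mem_univ, true_and]
    constructor
    · intro hx
      exact ⟨K.connectedComponentMk x, supp_subset_of_closed hcl hx, by
        rw [ConnectedComponent.mem_supp_iff]⟩
    · rintro ⟨c, hc, hxc⟩; exact hc hxc
  have hconv : ∀ (s : Set α) (_ : Fintype s), Nat.card s = s.toFinset.card := fun s _ => by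
    rw [Nat.card_coe_set_eq, Set.ncard_eq_toFinset_card']
  have hcard : Nat.card T = ∑ c ∈ Finset.univ.filter
      (fun c : K.ConnectedComponent => c.supp ⊆ T), Nat.card c.supp := by
    rw [hconv T _, hT, Finset.card_biUnion]
    · exact Finset.sum_congr rfl fun c _ => (hconv _ _).symm
    · intro x _ y _ hxy
      exact Set.disjoint_toFinset.mpr (pairwise_disjoint_supp_connectedComponent _ hxy)
  rw [hcard, Finset.odd_sum_iff_odd_card_odd] at hodd
  have hne : (Finset.filter (fun c : K.ConnectedComponent => Odd (Nat.card c.supp))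
      (Finset.univ.filter fun c => c.supp ⊆ T)).Nonempty := by
    rw [← Finset.card_pos]
    exact hodd.pos
  obtain ⟨c, hc⟩ := hne
  simp only [Finset.mem_filter, Finset.mem_univ, true_and] at hc
  exact ⟨c, hc.1, hc.2⟩

lemma matching_card_verts {V : Type*} [Fintype V] {G : SimpleGraph V} {M : G.Subgraph}
    (hM : M.IsMatching) : Nat.card M.verts = 2 * Nat.card M.edgeSet := by
  classical
  have h2 : ∀ (x y : V) (he : s(x, y) ∈ M.edgeSet),
      (Finset.univ.filter (fun v : M.verts => hM.toEdge v = ⟨s(x, y), he⟩)).card = 2 := by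
    intro x y he
    have hadj : M.Adj x y := Subgraph.mem_edgeSet.mp he
    have hne : x ≠ y := (M.adj_sub hadj).ne
    have hset : Finset.univ.filter (fun v : M.verts => hM.toEdge v = ⟨s(x, y), he⟩)
        = {⟨x, M.edge_vert hadj⟩, ⟨y, M.edge_vert hadj.symm⟩} := by
      ext ⟨v, hv⟩
      simp only [Finset.mem_filter, Finset.mem_univ, true_and, Finset.mem_insert,
        Finset.mem_singleton]
      constructor
      · intro hfe
        obtain ⟨w, hw, -⟩ := hM hv
        rw [hM.toEdge_eq_of_adj hw] at hfe
        have hval : s(v, w) = s(x, y) := congrArg Subtype.val hfe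
        rw [Sym2.eq_iff] at hval
        rcases hval with ⟨rfl, rfl⟩ | ⟨rfl, rfl⟩
        · left; rfl
        · right; rfl
      · rintro (h | h)
        · rw [Subtype.ext_iff] at h
          simp only at h
          subst h
          rw [hM.toEdge_eq_of_adj hadj]
        · rw [Subtype.ext_iff] at h
          simp only at h
          subst h
          rw [hM.toEdge_eq_of_adj hadj.symm]
          exact Subtype.ext (Sym2.eq_swap)
    rw [hset]
    rw [Finset.card_insert_of_notMem (by simp [Subtype.ext_iff, hne]), Finset.card_singleton]
  have h1 : (Finset.univ : Finset M.verts).card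
      = ∑ e ∈ (Finset.univ : Finset M.edgeSet),
        (Finset.univ.filter (fun v : M.verts => hM.toEdge v = e)).card :=
    Finset.card_eq_sum_card_fiberwise (fun x _ => Finset.mem_univ _)
  have h3 : ∀ e : M.edgeSet,
      (Finset.univ.filter (fun v : M.verts => hM.toEdge v = e)).card = 2 := by
    rintro ⟨e, he⟩
    induction e with
    | _ x y => exact h2 x y he
  rw [Nat.card_eq_fintype_card, Nat.card_eq_fintype_card, ← Finset.card_univ, h1,
    Finset.sum_congr rfl (fun e _ => h3 e), Finset.sum_const, Finset.card_univ, smul_eq_mul,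
    mul_comm]

variable {n : ℕ}

lemma oddComp_add_card_le (G : SimpleGraph (Fin n)) (U : Finset (Fin n)) :
    oddComp G U + U.card ≤ n := by
  classical
  set f : ({c : (G.induce ((↑U : Set (Fin n))ᶜ)).ConnectedComponent // Odd (Nat.card c.supp)}
      ⊕ ↥(↑U : Set (Fin n))) → Fin n := fun t =>
    match t with
    | Sum.inl c => ((supp_nonempty c.1).choose : ↥((↑U : Set (Fin n))ᶜ)).val
    | Sum.inr w => w.val
  have hf : Function.Injective f := by
    rintro (⟨c, hc⟩ | ⟨w, hw⟩) (⟨c', hc'⟩ | ⟨w', hw'⟩) h <;> simp only [f] at h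
    · have h1 := (supp_nonempty c).choose_spec
      have h2 := (supp_nonempty c').choose_spec
      have he : (supp_nonempty c).choose = (supp_nonempty c').choose := Subtype.ext h
      rw [he] at h1
      rw [ConnectedComponent.mem_supp_iff] at h1 h2
      obtain rfl : c = c' := h1.symm.trans h2
      rfl
    · rw [← h] at hw'
      exact absurd hw' ((supp_nonempty c).choose.2)
    · rw [h] at hw
      exact absurd hw ((supp_nonempty c').choose.2)
    · simp only [Sum.inr.injEq]
      exact Subtype.ext h
  have hle := Nat.card_le_card_of_injective f hf
  rw [Nat.card_sum, Nat.card_eq_fintype_card (α := Fin n), Fintype.card_fin,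
    Nat.card_coe_set_eq, Set.ncard_coe_finset] at hle
  exact hle

lemma odd_comp_unmatched_or_mem {G : SimpleGraph (Fin n)} {M : G.Subgraph}
    (hM : M.IsMatching) (U : Finset (Fin n))
    (c : (G.induce ((↑U : Set (Fin n))ᶜ)).ConnectedComponent)
    (hodd : Odd (Nat.card c.supp)) :
    (∃ x ∈ c.supp, (x : ↥((↑U : Set (Fin n))ᶜ)).val ∉ M.verts)
      ∨ (∃ w ∈ U, ∃ x ∈ c.supp, M.Adj (x : ↥((↑U : Set (Fin n))ᶜ)).val w) := by
  classical
  by_contra h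
  push_neg at h
  obtain ⟨h1, h2⟩ := h
  have hmat : (M.induce (Subtype.val '' c.supp)).IsMatching := by
    rintro v ⟨x, hxc, rfl⟩
    obtain ⟨w, hw, huniq⟩ := hM (h1 x hxc)
    have hwU : w ∉ (↑U : Set (Fin n)) := fun hmem => h2 w hmem x hxc hw
    have hadj : (G.induce ((↑U : Set (Fin n))ᶜ)).Adj x ⟨w, hwU⟩ := M.adj_sub hw
    have hwc : (⟨w, hwU⟩ : ↥((↑U : Set (Fin n))ᶜ)) ∈ c.supp := by
      rw [ConnectedComponent.mem_supp_iff] at hxc ⊢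
      rw [← hxc]
      exact ConnectedComponent.sound hadj.symm.reachable
    refine ⟨w, ⟨⟨x, hxc, rfl⟩, ⟨⟨w, hwU⟩, hwc, rfl⟩, hw⟩, ?_⟩
    intro y hy
    exact huniq y hy.2.2
  haveI : Fintype (M.induce (Subtype.val '' c.supp)).verts := Fintype.ofFinite _
  haveI : Fintype c.supp := Fintype.ofFinite _
  have heven := hmat.even_card
  apply Nat.not_even_iff_odd.2 hodd
  simp only [Subgraph.induce_verts, Set.toFinset_image,
    Finset.card_image_of_injective _ Subtype.val_injective, Set.toFinset_card,
    Nat.card_eq_fintype_card] at heven ⊢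
  exact heven

lemma berge_easy (G : SimpleGraph (Fin n)) (U : Finset (Fin n)) :
    nuG G ≤ (n - oddComp G U + U.card) / 2 := by
  classical
  rw [nuG]
  have hbot : (⊥ : G.Subgraph).IsMatching := by
    intro v hv
    rw [SimpleGraph.Subgraph.verts_bot] at hv
    exact absurd hv (Set.notMem_empty v)
  have h0 : (0 : ℕ) ∈ {r | ∃ M : G.Subgraph, M.IsMatching ∧ M.edgeSet.ncard = r} :=
    ⟨⊥, hbot, by rw [SimpleGraph.Subgraph.edgeSet_bot, Set.ncard_empty]⟩
  apply csSup_le ⟨0, h0⟩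
  rintro r ⟨M, hM, rfl⟩
  have hverts : Nat.card M.verts = 2 * Nat.card M.edgeSet := matching_card_verts hM
  have hP : ∀ c : {c : (G.induce ((↑U : Set (Fin n))ᶜ)).ConnectedComponent //
      Odd (Nat.card c.supp)},
      ∃ t : ↥(M.vertsᶜ) ⊕ ↥(↑U : Set (Fin n)),
        (∀ z : ↥(M.vertsᶜ), t = Sum.inl z → ∃ x ∈ c.1.supp,
          (x : ↥((↑U : Set (Fin n))ᶜ)).val = z.val) ∧
        (∀ w : ↥(↑U : Set (Fin n)), t = Sum.inr w → ∃ x ∈ c.1.supp,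
          M.Adj (x : ↥((↑U : Set (Fin n))ᶜ)).val w.val) := by
    rintro ⟨c, hc⟩
    rcases odd_comp_unmatched_or_mem hM U c hc with ⟨x, hx, hxm⟩ | ⟨w, hw, x, hx, hxw⟩
    · refine ⟨Sum.inl ⟨x.val, hxm⟩, ?_, ?_⟩
      · intro z hz
        rw [Sum.inl.injEq] at hz
        exact ⟨x, hx, congrArg Subtype.val hz⟩
      · intro w hw
        simp at hw
    · refine ⟨Sum.inr ⟨w, hw⟩, ?_, ?_⟩
      · intro z hz
        simp at hz
      · intro w' hw'
        rw [Sum.inr.injEq] at hw'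
        exact ⟨x, hx, hw' ▸ hxw⟩
  choose f hf1 hf2 using hP
  have hfinj : Function.Injective f := by
    intro c c' h
    rcases hfc : f c with z | w
    · obtain ⟨x, hx, hxz⟩ := hf1 c z hfc
      obtain ⟨x', hx', hxz'⟩ := hf1 c' z (h ▸ hfc)
      have hxx : x = x' := Subtype.ext (hxz.trans hxz'.symm)
      subst hxx
      rw [ConnectedComponent.mem_supp_iff] at hx hx'
      exact Subtype.ext (hx ▸ hx')
    · obtain ⟨x, hx, hxw⟩ := hf2 c w hfc
      obtain ⟨x', hx', hxw'⟩ := hf2 c' w (h ▸ hfc)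
      have hwv : (w : Fin n) ∈ M.verts := M.edge_vert hxw.symm
      obtain ⟨y, hy, huniq⟩ := hM hwv
      have e1 : (x : ↥((↑U : Set (Fin n))ᶜ)).val = y := huniq _ hxw.symm
      have e2 : (x' : ↥((↑U : Set (Fin n))ᶜ)).val = y := huniq _ hxw'.symm
      have hxx : x = x' := Subtype.ext (e1.trans e2.symm)
      subst hxx
      rw [ConnectedComponent.mem_supp_iff] at hx hx'
      exact Subtype.ext (hx ▸ hx')
  have hle := Nat.card_le_card_of_injective f hfinj
  rw [Nat.card_sum] at hle
  have hcompl : Nat.card ↥(M.vertsᶜ) + Nat.card ↥M.verts = n := by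
    have h0 := Set.ncard_add_ncard_compl M.verts
    rw [Nat.card_eq_fintype_card (α := Fin n), Fintype.card_fin] at h0
    rw [Nat.card_coe_set_eq, Nat.card_coe_set_eq]
    omega
  have hvle : Nat.card ↥M.verts ≤ n := by omega
  rw [Nat.card_coe_set_eq (↑U : Set (Fin n)), Set.ncard_coe_finset] at hle
  have hoc : oddComp G U ≤ Nat.card ↥(M.vertsᶜ) + U.card := hle
  rw [Nat.le_div_iff_mul_le (by norm_num : 0 < 2)]
  have hr : M.edgeSet.ncard = Nat.card M.edgeSet := (Nat.card_coe_set_eq _).symm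
  omega

end StmtAux

open StmtAux SimpleGraph

theorem stmt6 (n : ℕ) (G : SimpleGraph (Fin n)) (hstable : StableG G)
    (W : Finset (Fin n))
    (hW : nuG G = (n - oddComp G W + W.card) / 2)
    (hmax : ∀ W' : Finset (Fin n),
      nuG G = (n - oddComp G W' + W'.card) / 2 → W'.card ≤ W.card) :
    (∀ c : (G.induce ((↑W : Set (Fin n))ᶜ)).ConnectedComponent, Odd (Nat.card c.supp)) ∧
    (∀ c d : (G.induce ((↑W : Set (Fin n))ᶜ)).ConnectedComponent,
      1 < Nat.card c.supp → 1 < Nat.card d.supp → c = d) := by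
  classical
  have hodd : ∀ c : (G.induce ((↑W : Set (Fin n))ᶜ)).ConnectedComponent,
      Odd (Nat.card c.supp) := by
    by_contra hc
    push_neg at hc
    obtain ⟨c₀, hc₀⟩ := hc
    rw [Nat.not_odd_iff_even] at hc₀
    obtain ⟨v, hv⟩ := supp_nonempty c₀
    have hvW : (v : Fin n) ∉ W := by
      have h := v.2
      rw [Set.mem_compl_iff, Finset.mem_coe] at h
      exact h
    set W' : Finset (Fin n) := insert (v : Fin n) W with hW'def
    have hW'card : W'.card = W.card + 1 := Finset.card_insert_of_notMem hvW
    have hsub : ((↑W' : Set (Fin n))ᶜ) ⊆ ((↑W : Set (Fin n))ᶜ) := by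
      apply Set.compl_subset_compl.mpr
      intro x hx
      simp only [W', Finset.coe_insert, Set.mem_insert_iff]
      exact Or.inr hx
    set ι : ↥((↑W' : Set (Fin n))ᶜ) → ↥((↑W : Set (Fin n))ᶜ) := fun x => ⟨x.val, hsub x.2⟩
      with hιdef
    have hvmemW' : (v : Fin n) ∈ (↑W' : Set (Fin n)) := by
      simp [W']
    have claim1 : ∀ d : (G.induce ((↑W : Set (Fin n))ᶜ)).ConnectedComponent,
        (d = c₀ ∨ Odd (Nat.card d.supp)) →
        ∃ e : (G.induce ((↑W' : Set (Fin n))ᶜ)).ConnectedComponent,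
          e.supp ⊆ ι ⁻¹' d.supp ∧ Odd (Nat.card e.supp) := by
      intro d hd
      apply exists_odd_component
      · intro x y hx hxy
        simp only [Set.mem_preimage] at hx ⊢
        rw [ConnectedComponent.mem_supp_iff] at hx ⊢
        rw [← hx]
        have hadj : (G.induce ((↑W : Set (Fin n))ᶜ)).Adj (ι x) (ι y) := hxy
        exact ConnectedComponent.sound hadj.symm.reachable
      · rcases hd with rfl | hd
        · have hto : ∀ x : ↥(ι ⁻¹' d.supp), (ι x.1 : ↥((↑W : Set (Fin n))ᶜ)) ∈ d.supp \ {v} := by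
            intro x
            refine ⟨x.2, fun hmem => ?_⟩
            have hvv : (x.1 : Fin n) = (v : Fin n) := congrArg Subtype.val hmem
            exact x.1.2 (hvv ▸ hvmemW')
          have hbij : Function.Bijective
              (fun x : ↥(ι ⁻¹' d.supp) => (⟨ι x.1, hto x⟩ : ↥(d.supp \ {v}))) := by
            constructor
            · intro a b hab
              have h1 : ι a.1 = ι b.1 := congrArg Subtype.val hab
              have h2 : (a.1 : Fin n) = (b.1 : Fin n) := by
                simp only [hιdef, Subtype.mk.injEq] at h1
                exact h1
              exact Subtype.ext (Subtype.ext h2)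
            · rintro ⟨z, hz1, hz2⟩
              have hzW' : (z : Fin n) ∉ (↑W' : Set (Fin n)) := by
                rw [hW'def, Finset.coe_insert, Set.mem_insert_iff]
                rintro (h | h)
                · exact hz2 (Subtype.ext h)
                · exact z.2 h
              have hmempre : (⟨z.val, hzW'⟩ : ↥((↑W' : Set (Fin n))ᶜ)) ∈ ι ⁻¹' d.supp := by
                show ι _ ∈ d.supp
                have hzz : ι ⟨z.val, hzW'⟩ = z := Subtype.ext rfl
                rw [hzz]
                exact hz1
              exact ⟨⟨⟨z.val, hzW'⟩, hmempre⟩, Subtype.ext (Subtype.ext rfl)⟩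
          rw [Nat.card_congr (Equiv.ofBijective _ hbij), Nat.card_coe_set_eq,
            Set.ncard_diff_singleton_of_mem hv]
          rw [← Nat.card_coe_set_eq]
          have hpos : 0 < Nat.card d.supp := by
            haveI := (supp_nonempty d).to_subtype
            exact Nat.card_pos
          exact Nat.Even.sub_odd hpos hc₀ odd_one
        · have hvd : v ∉ d.supp := by
            intro hmem
            rw [ConnectedComponent.mem_supp_iff] at hmem hv
            rw [hv] at hmem
            rw [← hmem] at hd
            exact (Nat.not_odd_iff_even.2 hc₀) hd
          have hbij : Function.Bijective
              (fun x : ↥(ι ⁻¹' d.supp) => (⟨ι x.1, x.2⟩ : ↥d.supp)) := by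
            constructor
            · intro a b hab
              have h1 : ι a.1 = ι b.1 := congrArg Subtype.val hab
              have h2 : (a.1 : Fin n) = (b.1 : Fin n) := by
                simp only [hιdef, Subtype.mk.injEq] at h1
                exact h1
              exact Subtype.ext (Subtype.ext h2)
            · rintro ⟨z, hz1⟩
              have hzW' : (z : Fin n) ∉ (↑W' : Set (Fin n)) := by
                rw [hW'def, Finset.coe_insert, Set.mem_insert_iff]
                rintro (h | h)
                · exact hvd ((Subtype.ext h.symm : v = z) ▸ hz1)
                · exact z.2 h
              have hmempre : (⟨z.val, hzW'⟩ : ↥((↑W' : Set (Fin n))ᶜ)) ∈ ι ⁻¹' d.supp := by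
                show ι _ ∈ d.supp
                have hzz : ι ⟨z.val, hzW'⟩ = z := Subtype.ext rfl
                rw [hzz]
                exact hz1
              exact ⟨⟨⟨z.val, hzW'⟩, hmempre⟩, Subtype.ext (Subtype.ext rfl)⟩
          rw [Nat.card_congr (Equiv.ofBijective _ hbij)]
          exact hd
    set F : ({c : (G.induce ((↑W : Set (Fin n))ᶜ)).ConnectedComponent //
        Odd (Nat.card c.supp)} ⊕ Unit) →
        {c : (G.induce ((↑W' : Set (Fin n))ᶜ)).ConnectedComponent //
        Odd (Nat.card c.supp)} := fun t =>
      match t with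
      | Sum.inl d => ⟨(claim1 d.1 (Or.inr d.2)).choose, (claim1 d.1 (Or.inr d.2)).choose_spec.2⟩
      | Sum.inr _ => ⟨(claim1 c₀ (Or.inl rfl)).choose, (claim1 c₀ (Or.inl rfl)).choose_spec.2⟩
      with hFdef
    have haux : ∀ (d d' : (G.induce ((↑W : Set (Fin n))ᶜ)).ConnectedComponent)
        (h1 : d = c₀ ∨ Odd (Nat.card d.supp)) (h1' : d' = c₀ ∨ Odd (Nat.card d'.supp)),
        (claim1 d h1).choose = (claim1 d' h1').choose → d = d' := by
      intro d d' h1 h1' heq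
      obtain ⟨x, hx⟩ := supp_nonempty (claim1 d h1).choose
      have hx1 : ι x ∈ d.supp := (claim1 d h1).choose_spec.1 hx
      have hx2 : ι x ∈ d'.supp := (claim1 d' h1').choose_spec.1 (heq ▸ hx)
      rw [ConnectedComponent.mem_supp_iff] at hx1 hx2
      rw [← hx1, ← hx2]
    have hFinj : Function.Injective F := by
      rintro (⟨d, hd⟩ | ⟨⟩) (⟨d', hd'⟩ | ⟨⟩) h <;>
        simp only [F, Subtype.mk.injEq] at h
      · have := haux d d' (Or.inr hd) (Or.inr hd') h
        subst this
        rfl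
      · have hdc := haux d c₀ (Or.inr hd) (Or.inl rfl) h
        rw [hdc] at hd
        exact absurd hd (Nat.not_odd_iff_even.2 hc₀)
      · have hdc := haux c₀ d' (Or.inl rfl) (Or.inr hd') h
        rw [← hdc] at hd'
        exact absurd hd' (Nat.not_odd_iff_even.2 hc₀)
      · rfl
    have hcount : oddComp G W + 1 ≤ oddComp G W' := by
      have hle := Nat.card_le_card_of_injective F hFinj
      rw [Nat.card_sum, Nat.card_eq_fintype_card (α := Unit), Fintype.card_punit] at hle
      exact hle
    have hb := berge_easy G W'
    have hle2 := oddComp_add_card_le G W'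
    have heq : nuG G = (n - oddComp G W' + W'.card) / 2 := by
      have h1 : (n - oddComp G W' + W'.card) ≤ (n - oddComp G W + W.card) := by omega
      have h2 : (n - oddComp G W' + W'.card) / 2 ≤ (n - oddComp G W + W.card) / 2 :=
        Nat.div_le_div_right h1
      omega
    have := hmax W' heq
    omega
  refine ⟨hodd, ?_⟩
  have hedge : ∀ c : (G.induce ((↑W : Set (Fin n))ᶜ)).ConnectedComponent,
      1 < Nat.card c.supp → ∃ x y : ↥((↑W : Set (Fin n))ᶜ), x ∈ c.supp ∧ y ∈ c.supp ∧
        G.Adj x.val y.val := by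
    intro c hc
    obtain ⟨x, hx⟩ := supp_nonempty c
    have hy : ∃ y ∈ c.supp, y ≠ x := by
      by_contra h
      push_neg at h
      have hsub : c.supp ⊆ {x} := fun z hz => h z hz
      have h1 : Nat.card c.supp ≤ 1 := by
        rw [Nat.card_coe_set_eq]
        calc c.supp.ncard ≤ ({x} : Set _).ncard :=
              Set.ncard_le_ncard hsub (Set.finite_singleton x)
          _ = 1 := Set.ncard_singleton x
      omega
    obtain ⟨y, hy, hyx⟩ := hy
    rw [ConnectedComponent.mem_supp_iff] at hx hy
    have hreach : (G.induce ((↑W : Set (Fin n))ᶜ)).Reachable x y :=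
      ConnectedComponent.exact (hx.trans hy.symm)
    obtain ⟨w⟩ := hreach
    cases w with
    | nil => exact absurd rfl hyx.symm
    | cons h p =>
      rename_i b
      refine ⟨x, b, ?_, ?_, h⟩
      · rw [ConnectedComponent.mem_supp_iff]; exact hx
      · rw [ConnectedComponent.mem_supp_iff, ← hx]
        exact (ConnectedComponent.sound h.symm.reachable)
  intro c d hc hd
  obtain ⟨a₁, b₁, ha₁, hb₁, hab₁⟩ := hedge c hc
  obtain ⟨a₂, b₂, ha₂, hb₂, hab₂⟩ := hedge d hd
  by_contra hcd
  have hkey : ∀ (e f : (G.induce ((↑W : Set (Fin n))ᶜ)).ConnectedComponent)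
      (x₁ y₁ x₂ y₂ : ↥((↑W : Set (Fin n))ᶜ)), x₁ ∈ e.supp → y₁ ∈ e.supp →
      G.Adj x₁.val y₁.val → x₂ ∈ f.supp → G.Adj x₂.val y₂.val →
      (x₂ : Fin n) < (x₁ : Fin n) → e = f := by
    intro e f x₁ y₁ x₂ y₂ hx₁ hy₁ hxy₁ hx₂ hxy₂ hlt
    by_cases hbx : (y₁ : Fin n) = (x₂ : Fin n)
    · have hyx2 : y₁ = x₂ := Subtype.ext hbx
      subst hyx2
      rw [ConnectedComponent.mem_supp_iff] at hy₁ hx₂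
      rw [← hy₁, ← hx₂]
    · have hadj : G.Adj x₂.val y₁.val := hstable x₁.val x₂.val hlt y₁.val hxy₁ hbx
      have hadj' : (G.induce ((↑W : Set (Fin n))ᶜ)).Adj x₂ y₁ := hadj
      have hyf : y₁ ∈ f.supp := by
        rw [ConnectedComponent.mem_supp_iff] at hx₂ ⊢
        rw [← hx₂]
        exact ConnectedComponent.sound hadj'.symm.reachable
      rw [ConnectedComponent.mem_supp_iff] at hy₁ hyf
      rw [← hy₁, ← hyf]
  have reorder : ∀ (e : (G.induce ((↑W : Set (Fin n))ᶜ)).ConnectedComponent)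
      (x y : ↥((↑W : Set (Fin n))ᶜ)), x ∈ e.supp → y ∈ e.supp → G.Adj x.val y.val →
      ∃ x' y' : ↥((↑W : Set (Fin n))ᶜ), x' ∈ e.supp ∧ y' ∈ e.supp ∧ G.Adj x'.val y'.val ∧
        (y' : Fin n) < (x' : Fin n) := by
    intro e x y hx hy hxy
    rcases lt_or_gt_of_ne (Subtype.coe_ne_coe.mpr (fun h => hxy.ne (congrArg Subtype.val h)))
      with h | h
    · exact ⟨y, x, hy, hx, hxy.symm, h⟩
    · exact ⟨x, y, hx, hy, hxy, h⟩
  obtain ⟨a₁', b₁', ha₁', hb₁', hab₁', hord₁⟩ := reorder c a₁ b₁ ha₁ hb₁ hab₁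
  obtain ⟨a₂', b₂', ha₂', hb₂', hab₂', hord₂⟩ := reorder d a₂ b₂ ha₂ hb₂ hab₂
  rcases lt_trichotomy (a₁' : Fin n) (a₂' : Fin n) with h | h | h
  · exact hcd (hkey d c a₂' b₂' a₁' b₁' ha₂' hb₂' hab₂' ha₁' hab₁' h).symm
  · have he : a₁' = a₂' := Subtype.ext h
    subst he
    rw [ConnectedComponent.mem_supp_iff] at ha₁' ha₂'
    exact hcd (ha₁'.symm.trans ha₂')
  · exact hcd (hkey c d a₁' b₁' a₂' b₂' ha₁' hb₁' hab₁' ha₂' hab₂' h)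
end

section
/- Let $H'$ be a stable $k$-uniform hypergraph on $[n]$ with $n \in k\mathbb{Z}$, let $l \in [k-1]$, let $S = [n] \setminus [n-l]$ be the set of the $l$ largest vertices, and let $G$ be the $(k-l)$-uniform hypergraph on $[n-l]$ whose edges are the $(k-l)$-sets $T \subseteq [n-l]$ with $S \cup T \in E(H')$. If $G$ has a matching of size $n/k$, then $H'$ has a perfect matching. -/
open Finset

def domLE {n : ℕ} (e f : Finset (Fin n)) : Prop :=
  List.Forall₂ (· ≤ ·) (e.sort (· ≤ ·)) (f.sort (· ≤ ·))

def StableF {n : ℕ} (E : Finset (Finset (Fin n))) : Prop :=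
  ∀ e f : Finset (Fin n), domLE e f → f ∈ E → e ∈ E

lemma forall2_of_counts {α : Type*} [LinearOrder α] :
    ∀ (l₁ l₂ : List α), l₁.Pairwise (· ≤ ·) → l₂.Pairwise (· ≤ ·) → l₁.length = l₂.length →
    (∀ t, l₂.countP (fun x => decide (x ≤ t)) ≤ l₁.countP (fun x => decide (x ≤ t))) →
    List.Forall₂ (· ≤ ·) l₁ l₂ := by
  intro l₁
  induction l₁ with
  | nil =>
    intro l₂ _ _ hlen _
    simp at hlen
    simp [← List.length_eq_zero_iff.mp hlen.symm]
  | cons a l₁ ih =>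
    intro l₂ hs₁ hs₂ hlen hcnt
    cases l₂ with
    | nil => simp at hlen
    | cons b l₂ =>
      have hab : a ≤ b := by
        have h1 : 0 < (b :: l₂).countP (fun x => decide (x ≤ b)) := by
          rw [List.countP_pos_iff]; exact ⟨b, List.mem_cons_self, by simp⟩
        have h2 := lt_of_lt_of_le h1 (hcnt b)
        rw [List.countP_pos_iff] at h2
        obtain ⟨x, hx, hxb⟩ := h2
        simp at hxb
        rcases List.mem_cons.mp hx with rfl | hx
        · exact hxb
        · exact le_trans ((List.pairwise_cons.mp hs₁).1 x hx) hxb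
      refine List.Forall₂.cons hab (ih l₂ (List.pairwise_cons.mp hs₁).2
        (List.pairwise_cons.mp hs₂).2 (by simpa using hlen) ?_)
      intro t
      by_cases hbt : b ≤ t
      · have := hcnt t
        simp only [List.countP_cons, hbt, le_trans hab hbt, decide_true] at this
        omega
      · have : l₂.countP (fun x => decide (x ≤ t)) = 0 := by
          rw [List.countP_eq_zero]
          intro x hx
          simp only [decide_eq_true_eq]
          intro hxt
          exact hbt (le_trans ((List.pairwise_cons.mp hs₂).1 x hx) hxt)
        omega

lemma countP_sort {n : ℕ} (s : Finset (Fin n)) (t : Fin n) :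
    (s.sort (· ≤ ·)).countP (fun x => decide (x ≤ t)) = (s.filter (· ≤ t)).card := by
  rw [(s.sort_perm_toList (· ≤ ·)).countP_eq]
  rw [← Multiset.coe_countP, Finset.coe_toList, Multiset.countP_eq_card_filter]
  rfl

lemma domLE_of_counts {n : ℕ} (A B : Finset (Fin n)) (hcard : A.card = B.card)
    (h : ∀ t : Fin n, (B.filter (· ≤ t)).card ≤ (A.filter (· ≤ t)).card) : domLE A B := by
  refine forall2_of_counts _ _ (A.pairwise_sort _) (B.pairwise_sort _) ?_ ?_
  · simp [Finset.length_sort, hcard]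
  · intro t
    rw [countP_sort, countP_sort]
    exact h t

/-- The key stability step: replacing the top `l` vertices by any other `l` vertices
disjoint from `T` gives an edge dominated by `S ∪ T`. -/
lemma dom_step {n k l : ℕ} (hl : 0 < l) (hlk : l ≤ k) (hln : l ≤ n)
    (T S' : Finset (Fin n)) (hT : T.card = k - l) (hTlow : ∀ i ∈ T, (i : ℕ) < n - l)
    (hS' : S'.card = l) (hdisj : Disjoint T S') :
    domLE (T ∪ S') ((univ.filter (fun i : Fin n => n - l ≤ (i : ℕ))) ∪ T) := by
  set S : Finset (Fin n) := univ.filter (fun i : Fin n => n - l ≤ (i : ℕ)) with hSdef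
  have hST : Disjoint S T := by
    rw [Finset.disjoint_left]
    intro x hx hxT
    have h1 : n - l ≤ (x : ℕ) := (Finset.mem_filter.mp hx).2
    exact absurd (hTlow x hxT) (by omega)
  have hScard : S.card = l := by
    have hmap : S.map Fin.valEmbedding = Finset.Ico (n - l) n := by
      ext x
      simp only [Finset.mem_map, Finset.mem_Ico, hSdef, Finset.mem_filter, Finset.mem_univ,
        true_and, Fin.valEmbedding_apply]
      constructor
      · rintro ⟨y, hy, rfl⟩; exact ⟨hy, y.isLt⟩
      · rintro ⟨h1, h2⟩; exact ⟨⟨x, h2⟩, h1, rfl⟩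
    have := congrArg Finset.card hmap
    rw [Finset.card_map, Nat.card_Ico] at this
    omega
  have hcardA : (T ∪ S').card = k := by
    rw [Finset.card_union_of_disjoint hdisj, hT, hS']; omega
  have hcardB : (S ∪ T).card = k := by
    rw [Finset.card_union_of_disjoint hST, hScard, hT]; omega
  refine domLE_of_counts _ _ (by rw [hcardA, hcardB]) ?_
  intro t
  by_cases ht : (t : ℕ) < n - l
  · have heq : (S ∪ T).filter (· ≤ t) = T.filter (· ≤ t) := by
      ext x
      simp only [Finset.mem_filter, Finset.mem_union, hSdef, Finset.mem_univ, true_and]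
      constructor
      · rintro ⟨hx | hx, hxt⟩
        · exfalso
          have hxt' : (x : ℕ) ≤ (t : ℕ) := hxt
          omega
        · exact ⟨hx, hxt⟩
      · rintro ⟨hx, hxt⟩; exact ⟨Or.inr hx, hxt⟩
    rw [heq]
    exact Finset.card_le_card (Finset.filter_subset_filter _ Finset.subset_union_left)
  · -- t ≥ n - l : all elements > t lie in S ⊆ S ∪ T
    push_neg at ht
    have h1 := Finset.card_filter_add_card_filter_not (s := S ∪ T) (p := (· ≤ t))
    have h2 := Finset.card_filter_add_card_filter_not (s := T ∪ S') (p := (· ≤ t))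
    have hsub : (T ∪ S').filter (fun x => ¬ x ≤ t) ⊆ (S ∪ T).filter (fun x => ¬ x ≤ t) := by
      intro x hx
      have hx' := Finset.mem_filter.mp hx
      refine Finset.mem_filter.mpr ⟨?_, hx'.2⟩
      have hxt : ¬ ((x : ℕ) ≤ (t : ℕ)) := fun hle => hx'.2 hle
      refine Finset.mem_union_left _ ?_
      simp only [hSdef, Finset.mem_filter, Finset.mem_univ, true_and]
      omega
    have h3 := Finset.card_le_card hsub
    rw [hcardA] at h2
    rw [hcardB] at h1
    omega

lemma aux_partition {n l : ℕ} (hl : 0 < l) :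
    ∀ (m : ℕ) (M : Finset (Finset (Fin n))) (R : Finset (Fin n)), M.card = m →
    IsMatchingF M → (∀ T ∈ M, Disjoint T R) → R.card = m * l →
    ∃ M' : Finset (Finset (Fin n)), IsMatchingF M' ∧
      M'.biUnion id = M.biUnion id ∪ R ∧
      ∀ e ∈ M', ∃ T ∈ M, ∃ S', e = T ∪ S' ∧ S'.card = l ∧ Disjoint T S' := by
  intro m
  induction m with
  | zero =>
    intro M R hMcard _ _ hRcard
    have hM : M = ∅ := Finset.card_eq_zero.mp hMcard
    have hR : R = ∅ := Finset.card_eq_zero.mp (by simpa using hRcard)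
    exact ⟨∅, by intro e he; simp at he, by simp [hM, hR], by intro e he; simp at he⟩
  | succ m ih =>
    intro M R hMcard hmatch hdisj hRcard
    have hMne : M.Nonempty := Finset.card_pos.mp (by omega)
    obtain ⟨T, hT⟩ := hMne
    have hlR : l ≤ R.card := by rw [hRcard, Nat.succ_mul]; omega
    obtain ⟨S', hS'R, hS'card⟩ := Finset.exists_subset_card_eq hlR
    have hMe : (M.erase T).card = m := by rw [Finset.card_erase_of_mem hT, hMcard]; omega
    have hmatch' : IsMatchingF (M.erase T) := fun e he f hf hef =>
      hmatch e (Finset.mem_of_mem_erase he) f (Finset.mem_of_mem_erase hf) hef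
    have hdisj' : ∀ T' ∈ M.erase T, Disjoint T' (R \ S') :=
      fun T' hT' => Finset.disjoint_of_subset_right Finset.sdiff_subset
        (hdisj T' (Finset.mem_of_mem_erase hT'))
    have hRcard' : (R \ S').card = m * l := by
      rw [Finset.card_sdiff_of_subset hS'R, hRcard, hS'card, Nat.succ_mul]; omega
    obtain ⟨M'', hm'', hbU'', hprop''⟩ := ih (M.erase T) (R \ S') hMe hmatch' hdisj' hRcard'
    set e₀ : Finset (Fin n) := T ∪ S' with he₀def
    have he₀disj : Disjoint e₀ (M''.biUnion id) := by
      rw [hbU'']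
      rw [Finset.disjoint_union_left, Finset.disjoint_union_right, Finset.disjoint_union_right]
      refine ⟨⟨?_, ?_⟩, ?_, ?_⟩
      · -- T vs (M.erase T).biUnion
        rw [Finset.disjoint_biUnion_right]
        intro T' hT'
        exact hmatch T hT T' (Finset.mem_of_mem_erase hT')
          (fun h => (Finset.mem_erase.mp hT').1 h.symm)
      · exact Finset.disjoint_of_subset_right Finset.sdiff_subset (hdisj T hT)
      · rw [Finset.disjoint_biUnion_right]
        intro T' hT'
        exact Finset.disjoint_of_subset_left hS'R
          ((hdisj T' (Finset.mem_of_mem_erase hT')).symm)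
      · exact Finset.sdiff_disjoint.symm
    refine ⟨insert e₀ M'', ?_, ?_, ?_⟩
    · intro e he f hf hef
      rcases Finset.mem_insert.mp he with rfl | he' <;>
        rcases Finset.mem_insert.mp hf with rfl | hf'
      · exact absurd rfl hef
      · exact Finset.disjoint_of_subset_right
          (Finset.subset_biUnion_of_mem id hf') he₀disj
      · exact (Finset.disjoint_of_subset_right
          (Finset.subset_biUnion_of_mem id he') he₀disj).symm
      · exact hm'' e he' f hf' hef
    · rw [Finset.biUnion_insert, hbU'']
      have h1 : M.biUnion id = T ∪ (M.erase T).biUnion id := by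
        conv_lhs => rw [← Finset.insert_erase hT]
        rw [Finset.biUnion_insert]; rfl
      have h2 : R = S' ∪ (R \ S') := (Finset.union_sdiff_of_subset hS'R).symm
      rw [h1]
      conv_rhs => rw [h2]
      ext x
      simp only [he₀def, Finset.mem_union, id]
      tauto
    · intro e he
      rcases Finset.mem_insert.mp he with rfl | he'
      · exact ⟨T, hT, S', rfl, hS'card, Finset.disjoint_left.mpr
          (fun x hxT hxS' => Finset.disjoint_left.mp (hdisj T hT) hxT (hS'R hxS'))⟩
      · obtain ⟨T', hT', S'', h1, h2, h3⟩ := hprop'' e he'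
        exact ⟨T', Finset.mem_of_mem_erase hT', S'', h1, h2, h3⟩

theorem stmt11 (n k l : ℕ) (hk : 2 ≤ k) (hl : 0 < l) (hlk : l < k) (hdvd : k ∣ n)
    (E : Finset (Finset (Fin n))) (hunif : ∀ e ∈ E, e.card = k) (hstable : StableF E)
    -- the link hypergraph `G` of the `l` largest vertices has a matching of size `n/k`
    (hG : ∃ M ⊆ ((univ : Finset (Fin n)).powersetCard (k - l)).filter
        (fun T => (∀ i : Fin n, i ∈ T → (i : ℕ) < n - l) ∧
          (univ.filter (fun i : Fin n => n - l ≤ (i : ℕ))) ∪ T ∈ E),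
        IsMatchingF M ∧ M.card = n / k) :
    ∃ M ⊆ E, IsMatchingF M ∧ M.biUnion id = univ := by
  obtain ⟨M, hMsub, hmatch, hMcard⟩ := hG
  have hMprop : ∀ T ∈ M, T.card = k - l ∧ (∀ i ∈ T, (i : ℕ) < n - l) ∧
      (univ.filter (fun i : Fin n => n - l ≤ (i : ℕ))) ∪ T ∈ E := by
    intro T hT
    have h := hMsub hT
    rw [Finset.mem_filter, Finset.mem_powersetCard] at h
    exact ⟨h.1.2, h.2.1, h.2.2⟩
  set R : Finset (Fin n) := univ \ M.biUnion id with hRdef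
  have hdisjR : ∀ T ∈ M, Disjoint T R := by
    intro T hT
    exact Finset.disjoint_of_subset_left (Finset.subset_biUnion_of_mem id hT)
      Finset.disjoint_sdiff
  have hbUcard : (M.biUnion id).card = (n / k) * (k - l) := by
    rw [Finset.card_biUnion (t := id) (fun x hx y hy hxy => hmatch x hx y hy hxy)]
    simp only [id_eq]
    rw [Finset.sum_const_nat (fun T hT => (hMprop T hT).1), hMcard]
  have hn : n = (n / k) * k := (Nat.div_mul_cancel hdvd).symm
  have hRcard : R.card = (n / k) * l := by
    rw [hRdef, Finset.card_sdiff_of_subset (Finset.subset_univ _), Finset.card_univ, Fintype.card_fin,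
      hbUcard]
    have e1 : (n / k) * (k - l) + (n / k) * l = (n / k) * k := by
      rw [← Nat.mul_add]
      congr 1
      omega
    omega
  obtain ⟨M', hm', hbU', hprop'⟩ := aux_partition hl (n / k) M R hMcard hmatch hdisjR hRcard
  refine ⟨M', ?_, hm', ?_⟩
  · intro e he
    obtain ⟨T, hT, S', rfl, hS'card, hTS'⟩ := hprop' e he
    have hkn : k ≤ n := by
      by_contra hc
      push_neg at hc
      have : n / k = 0 := Nat.div_eq_of_lt hc
      rw [this] at hMcard
      exact absurd hT (by simp [Finset.card_eq_zero.mp hMcard])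
    obtain ⟨hTcard, hTlow, hTE⟩ := hMprop T hT
    exact hstable _ _ (dom_step hl (le_of_lt hlk) (by omega) T S' hTcard hTlow hS'card hTS') hTE
  · rw [hbU', hRdef, Finset.union_sdiff_of_subset (Finset.subset_univ _)]
end

section
/- Let $k \ge 3$, $l \in [k-1]$, and let $\alpha$ be a positive real with $\alpha < (8^{k-1} k^{5(k-1)} k!)^{-1}$. Let $n \ge 8k^6$ and $n/(2k^5) < m \le n/k$ be integers. Suppose $H$ is a $k$-graph on $n$ vertices with vertex partition $U, W$, $|W| = m$, $|U| = n - m$, such that every vertex $v$ of $H$ satisfies $|N_{H_k^{k-l}(U,W)}(v) \setminus N_H(v)| \le \alpha n^{k-1}$. Then $H$ has a matching of size $m$. -/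
open Finset

set_option maxHeartbeats 2000000

def Hkkl (n k l : ℕ) (W : Finset (Fin n)) : Finset (Finset (Fin n)) :=
  ((univ : Finset (Fin n)).powersetCard k).filter
    (fun e => 1 ≤ (e ∩ W).card ∧ (e ∩ W).card ≤ k - l)

def linkF {n : ℕ} (E : Finset (Finset (Fin n))) (k : ℕ) (v : Fin n) :
    Finset (Finset (Fin n)) :=
  ((univ : Finset (Fin n)).powersetCard (k - 1)).filter
    (fun T => v ∉ T ∧ insert v T ∈ E)

namespace Stmt13

variable {n : ℕ}

/-- the candidate edge built from a W-vertex `w`, a last vertex `u` and a `(k-2)`-set `S`. -/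
def edgeF (w u : Fin n) (S : Finset (Fin n)) : Finset (Fin n) := insert w (insert u S)

/-- number of blocked completions of the client `{w} ∪ S`. -/
def DcntF (E : Finset (Finset (Fin n))) (U : Finset (Fin n)) (w : Fin n)
    (S : Finset (Fin n)) : ℕ :=
  ((U \ S).filter (fun u => edgeF w u S ∉ E)).card

/-- number of blocked `K`-sets through a fixed last vertex `u`. -/
def AcntF (E : Finset (Finset (Fin n))) (U : Finset (Fin n)) (K : ℕ) (w u : Fin n) : ℕ :=
  (((U \ {u}).powersetCard K).filter (fun S => edgeF w u S ∉ E)).card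

/-- blocked `(K+1)`-sets at `w`. -/
def BadTF (E : Finset (Finset (Fin n))) (U : Finset (Fin n)) (K : ℕ) (w : Fin n) :
    Finset (Finset (Fin n)) :=
  (U.powersetCard (K+1)).filter (fun T => insert w T ∉ E)

/-- load of `u`: number of already-built clients blocked at `u`. -/
def LcntF (E : Finset (Finset (Fin n))) {m : ℕ} (wf : Fin m → Fin n)
    (g : Fin m → Finset (Fin n)) (i : ℕ) (u : Fin n) : ℕ :=
  ((univ : Finset (Fin m)).filter
    (fun j : Fin m => (j : ℕ) < i ∧ u ∉ g j ∧ edgeF (wf j) u (g j) ∉ E)).card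

lemma insert_mem_Hkkl {W : Finset (Fin n)} {K l : ℕ} (hl : 1 ≤ l) (hlk : l ≤ K + 1)
    {w : Fin n} (hw : w ∈ W) {T : Finset (Fin n)} (hTW : ∀ x ∈ T, x ∉ W)
    (hwT : w ∉ T) (hcard : T.card = K + 1) :
    insert w T ∈ Hkkl n (K + 2) l W := by
  have hIW : insert w T ∩ W = {w} := by
    ext x
    simp only [mem_inter, mem_insert, mem_singleton]
    constructor
    · rintro ⟨hx | hx, hxW⟩
      · exact hx
      · exact absurd hxW (hTW x hx)
    · rintro rfl
      exact ⟨Or.inl rfl, hw⟩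
  rw [Hkkl, mem_filter, mem_powersetCard, hIW, card_singleton]
  exact ⟨⟨subset_univ _, by rw [card_insert_of_notMem hwT, hcard]⟩, le_refl 1, by omega⟩

lemma badT_card_le {E : Finset (Finset (Fin n))} {W : Finset (Fin n)} {K l : ℕ}
    (hl : 1 ≤ l) (hlk : l ≤ K + 1) {w : Fin n} (hw : w ∈ W) :
    (BadTF E (univ \ W) K w).card
      ≤ ((linkF (Hkkl n (K+2) l W) (K+2) w) \ (linkF E (K+2) w)).card := by
  apply card_le_card
  intro T hT
  rw [BadTF, mem_filter, mem_powersetCard] at hT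
  obtain ⟨⟨hTU, hTcard⟩, hTE⟩ := hT
  have hTW : ∀ x ∈ T, x ∉ W := fun x hx => (mem_sdiff.1 (hTU hx)).2
  have hwT : w ∉ T := fun h => hTW w h hw
  rw [mem_sdiff, linkF, linkF, mem_filter, mem_filter, mem_powersetCard]
  have h1 : K + 2 - 1 = K + 1 := rfl
  rw [h1]
  refine ⟨⟨⟨subset_univ _, hTcard⟩, hwT, insert_mem_Hkkl hl hlk hw hTW hwT hTcard⟩, ?_⟩
  intro hmem
  exact hTE hmem.2.2

lemma sum_Acnt_le {E : Finset (Finset (Fin n))} {W : Finset (Fin n)} {K l m : ℕ}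
    (hl : 1 ≤ l) (hlk : l ≤ K + 1) (wf : Fin m → Fin n) (hwf : ∀ j, wf j ∈ W)
    (hwfInj : Function.Injective wf) {u : Fin n} (hu : u ∉ W) :
    (∑ j : Fin m, AcntF E (univ \ W) K (wf j) u)
      ≤ ((linkF (Hkkl n (K+2) l W) (K+2) u) \ (linkF E (K+2) u)).card := by
  classical
  set U : Finset (Fin n) := (univ : Finset (Fin n)) \ W with hU
  set B : Fin m → Finset (Finset (Fin n)) := fun j =>
    (((U \ {u}).powersetCard K).filter (fun S => edgeF (wf j) u S ∉ E)).image
      (fun S => insert (wf j) S) with hB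
  have hSnotW : ∀ (S : Finset (Fin n)), S ⊆ U \ {u} → ∀ x ∈ S, x ∉ W := by
    intro S hS x hx
    have := hS hx
    rw [mem_sdiff, hU, mem_sdiff] at this
    exact this.1.2
  have hwfnot : ∀ j (S : Finset (Fin n)), S ⊆ U \ {u} → wf j ∉ S := by
    intro j S hS hmem
    exact hSnotW S hS _ hmem (hwf j)
  have hunotS : ∀ (S : Finset (Fin n)), S ⊆ U \ {u} → u ∉ S := by
    intro S hS hmem
    have := hS hmem
    rw [mem_sdiff, mem_singleton] at this
    exact this.2 rfl
  have hcardB : ∀ j, (B j).card = AcntF E U K (wf j) u := by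
    intro j
    rw [hB]
    apply card_image_of_injOn
    intro S hS S' hS' hEq
    simp only at hEq
    rw [mem_coe, mem_filter, mem_powersetCard] at hS hS'
    have h1 : wf j ∉ S := hwfnot j S hS.1.1
    have h2 : wf j ∉ S' := hwfnot j S' hS'.1.1
    have : (insert (wf j) S).erase (wf j) = (insert (wf j) S').erase (wf j) := by rw [hEq]
    rwa [erase_insert h1, erase_insert h2] at this
  have hdisj : ∀ j ∈ (univ : Finset (Fin m)), ∀ j' ∈ (univ : Finset (Fin m)), j ≠ j' →
      Disjoint (B j) (B j') := by
    intro j _ j' _ hne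
    rw [disjoint_left]
    intro T hT hT'
    rw [hB, mem_image] at hT hT'
    obtain ⟨S, hS, rfl⟩ := hT
    obtain ⟨S', hS', hEq⟩ := hT'
    rw [mem_filter, mem_powersetCard] at hS hS'
    have hmem : wf j ∈ insert (wf j') S' := by rw [hEq]; exact mem_insert_self _ _
    rcases mem_insert.1 hmem with h | h
    · exact hne (hwfInj h)
    · exact hwfnot j S' hS'.1.1 h
  calc (∑ j : Fin m, AcntF E U K (wf j) u) = ∑ j : Fin m, (B j).card := by
        simp only [hcardB]
    _ = ((univ : Finset (Fin m)).biUnion B).card := (card_biUnion hdisj).symm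
    _ ≤ _ := by
        apply card_le_card
        intro T hT
        rw [mem_biUnion] at hT
        obtain ⟨j, _, hTj⟩ := hT
        rw [hB, mem_image] at hTj
        obtain ⟨S, hS, rfl⟩ := hTj
        rw [mem_filter, mem_powersetCard] at hS
        obtain ⟨⟨hSsub, hScard⟩, hSE⟩ := hS
        have hwfS : wf j ∉ S := hwfnot j S hSsub
        have huS : u ∉ S := hunotS S hSsub
        have huwf : u ≠ wf j := fun h => hu (h ▸ hwf j)
        have huT : u ∉ insert (wf j) S := by
          rw [mem_insert]
          rintro (h | h)
          · exact huwf h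
          · exact huS h
        have hcomm : insert u (insert (wf j) S) = edgeF (wf j) u S := Finset.insert_comm u (wf j) S
        rw [mem_sdiff, linkF, linkF, mem_filter, mem_filter, mem_powersetCard]
        have h1 : K + 2 - 1 = K + 1 := rfl
        rw [h1]
        constructor
        · refine ⟨⟨subset_univ _, by rw [card_insert_of_notMem hwfS, hScard]⟩, huT, ?_⟩
          rw [Finset.insert_comm]
          apply insert_mem_Hkkl hl hlk (hwf j)
          · intro x hx
            rcases mem_insert.1 hx with h | h
            · exact h ▸ hu
            · exact hSnotW S hSsub x h
          · rw [mem_insert]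
            rintro (h | h)
            · exact huwf h.symm
            · exact hwfS h
          · rw [card_insert_of_notMem huS, hScard]
        · intro hmem
          exact hSE (hcomm ▸ hmem.2.2)

lemma sum_Dcnt_le {E : Finset (Finset (Fin n))} {U F : Finset (Fin n)} {K : ℕ} (w : Fin n)
    (hFU : F ⊆ U) :
    ∑ S ∈ F.powersetCard K, DcntF E U w S ≤ (K+1) * (BadTF E U K w).card := by
  classical
  have hsig : ∑ S ∈ F.powersetCard K, DcntF E U w S
      = ((F.powersetCard K).sigma
          (fun S => (U \ S).filter (fun u => edgeF w u S ∉ E))).card := by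
    rw [card_sigma]
    rfl
  rw [hsig]
  apply card_le_mul_card_image_of_maps_to (f := fun p => insert p.2 p.1)
  · rintro ⟨S, u⟩ hp
    rw [mem_sigma] at hp
    obtain ⟨hS, hu⟩ := hp
    rw [mem_powersetCard] at hS
    rw [mem_filter, mem_sdiff] at hu
    rw [BadTF, mem_filter, mem_powersetCard]
    refine ⟨⟨?_, ?_⟩, ?_⟩
    · intro x hx
      rcases mem_insert.1 hx with h | h
      · exact h ▸ hu.1.1
      · exact hFU (hS.1 h)
    · rw [card_insert_of_notMem hu.1.2, hS.2]
    · exact hu.2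
  · intro T hT
    rw [BadTF, mem_filter, mem_powersetCard] at hT
    have hTcard : T.card = K + 1 := hT.1.2
    calc _ ≤ T.card := by
          apply card_le_card_of_injOn (fun p => p.2)
          · rintro ⟨S, u⟩ hp
            rw [mem_coe, mem_filter] at hp
            have : u ∈ insert u S := mem_insert_self _ _
            rw [hp.2] at this
            exact this
          · rintro ⟨S, u⟩ hp ⟨S', u'⟩ hp' hEq
            simp only at hEq
            rw [mem_coe, mem_filter, mem_sigma] at hp hp'
            have huS : u ∉ S := by
              have := (mem_filter.1 hp.1.2).1
              exact (mem_sdiff.1 this).2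
            have huS' : u' ∉ S' := by
              have := (mem_filter.1 hp'.1.2).1
              exact (mem_sdiff.1 this).2
            have hS : S = S' := by
              have h1 : (insert u S).erase u = T.erase u := by rw [hp.2]
              have h2 : (insert u' S').erase u' = T.erase u' := by rw [hp'.2]
              rw [erase_insert huS] at h1
              rw [erase_insert huS'] at h2
              rw [h1, h2, hEq]
            subst hS
            subst hEq
            rfl
      _ = K + 1 := hTcard

noncomputable def VWF (E : Finset (Finset (Fin n))) (U : Finset (Fin n)) (K : ℕ) {m : ℕ}
    (wf : Fin m → Fin n) (C0 : ℕ) (i : ℕ) (u : Fin n) : ℝ :=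
  ∏ j ∈ (univ : Finset (Fin m)).filter (fun j : Fin m => i ≤ (j : ℕ)),
    (1 + (Real.exp 1 - 1) * (4 * (AcntF E U K (wf j) u) / (3 * C0)))

lemma exp_one_sub_one_nonneg : (0:ℝ) ≤ Real.exp 1 - 1 := by
  have := Real.exp_one_gt_d9
  norm_num at this
  linarith

lemma Lcnt_congr {E : Finset (Finset (Fin n))} {m : ℕ} (wf : Fin m → Fin n)
    {g g' : Fin m → Finset (Fin n)} {i : ℕ} (u : Fin n)
    (h : ∀ j : Fin m, (j : ℕ) < i → g j = g' j) :
    LcntF E wf g i u = LcntF E wf g' i u := by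
  unfold LcntF
  congr 1
  apply filter_congr
  intro j _
  constructor
  · rintro ⟨h1, h2, h3⟩
    rw [h j h1] at h2 h3
    exact ⟨h1, h2, h3⟩
  · rintro ⟨h1, h2, h3⟩
    rw [← h j h1] at h2 h3
    exact ⟨h1, h2, h3⟩

lemma Lcnt_succ {E : Finset (Finset (Fin n))} {m : ℕ} (wf : Fin m → Fin n)
    (g : Fin m → Finset (Fin n)) {i : ℕ} (hi : i < m) (u : Fin n) :
    LcntF E wf g (i+1) u = LcntF E wf g i u +
      (if (u ∉ g ⟨i, hi⟩ ∧ edgeF (wf ⟨i, hi⟩) u (g ⟨i, hi⟩) ∉ E) then 1 else 0) := by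
  unfold LcntF
  by_cases hP : (u ∉ g ⟨i, hi⟩ ∧ edgeF (wf ⟨i, hi⟩) u (g ⟨i, hi⟩) ∉ E)
  · rw [if_pos hP]
    have hset : (univ : Finset (Fin m)).filter
          (fun j : Fin m => (j:ℕ) < i + 1 ∧ u ∉ g j ∧ edgeF (wf j) u (g j) ∉ E)
        = insert ⟨i, hi⟩ ((univ : Finset (Fin m)).filter
          (fun j : Fin m => (j:ℕ) < i ∧ u ∉ g j ∧ edgeF (wf j) u (g j) ∉ E)) := by
      ext j
      simp only [mem_filter, mem_insert, mem_univ, true_and]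
      constructor
      · rintro ⟨h1, h2, h3⟩
        by_cases hj : (j:ℕ) < i
        · exact Or.inr ⟨hj, h2, h3⟩
        · exact Or.inl (Fin.ext (show (j:ℕ) = i by omega))
      · rintro (rfl | ⟨h1, h2, h3⟩)
        · exact ⟨Nat.lt_succ_self i, hP⟩
        · exact ⟨Nat.lt_succ_of_lt h1, h2, h3⟩
    rw [hset, card_insert_of_notMem]
    intro hmem
    exact Nat.lt_irrefl i (mem_filter.1 hmem).2.1
  · rw [if_neg hP, add_zero]
    congr 1
    apply filter_congr
    intro j _
    constructor
    · rintro ⟨h1, h2, h3⟩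
      refine ⟨?_, h2, h3⟩
      rcases (by omega : (j:ℕ) < i ∨ (j:ℕ) = i) with h | h
      · exact h
      · exfalso
        have hj : j = ⟨i, hi⟩ := Fin.ext h
        rw [hj] at h2 h3
        exact hP ⟨h2, h3⟩
    · rintro ⟨h1, h2, h3⟩
      exact ⟨by omega, h2, h3⟩

lemma VWF_factor_one_le (E : Finset (Finset (Fin n))) (U : Finset (Fin n)) (K : ℕ) {m : ℕ}
    (wf : Fin m → Fin n) (C0 : ℕ) (j : Fin m) (u : Fin n) :
    (1:ℝ) ≤ 1 + (Real.exp 1 - 1) * (4 * (AcntF E U K (wf j) u) / (3 * C0)) := by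
  have h : (0:ℝ) ≤ (Real.exp 1 - 1) * (4 * (AcntF E U K (wf j) u) / (3 * C0)) := by
    apply mul_nonneg exp_one_sub_one_nonneg
    apply div_nonneg
    · positivity
    · positivity
  linarith

lemma VWF_one_le (E : Finset (Finset (Fin n))) (U : Finset (Fin n)) (K : ℕ) {m : ℕ}
    (wf : Fin m → Fin n) (C0 : ℕ) (i : ℕ) (u : Fin n) :
    (1:ℝ) ≤ VWF E U K wf C0 i u := by
  unfold VWF
  calc (1:ℝ) = ∏ _j ∈ (univ : Finset (Fin m)).filter (fun j : Fin m => i ≤ (j : ℕ)), (1:ℝ) :=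
        (prod_const_one).symm
    _ ≤ _ := by
        apply Finset.prod_le_prod
        · intro j _; norm_num
        · intro j _; exact VWF_factor_one_le E U K wf C0 j u

lemma VWF_succ (E : Finset (Finset (Fin n))) (U : Finset (Fin n)) (K : ℕ) {m : ℕ}
    (wf : Fin m → Fin n) (C0 : ℕ) {i : ℕ} (hi : i < m) (u : Fin n) :
    VWF E U K wf C0 i u = (1 + (Real.exp 1 - 1) *
        (4 * (AcntF E U K (wf ⟨i, hi⟩) u) / (3 * C0))) * VWF E U K wf C0 (i+1) u := by
  unfold VWF
  have hset : (univ : Finset (Fin m)).filter (fun j : Fin m => i ≤ (j:ℕ))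
      = insert ⟨i, hi⟩ ((univ : Finset (Fin m)).filter (fun j : Fin m => i + 1 ≤ (j:ℕ))) := by
    ext j
    simp only [mem_filter, mem_insert, mem_univ, true_and]
    constructor
    · intro h1
      by_cases hj : i + 1 ≤ (j:ℕ)
      · exact Or.inr hj
      · exact Or.inl (Fin.ext (show (j:ℕ) = i by omega))
    · rintro (rfl | h1)
      · exact le_refl i
      · omega
  rw [hset, prod_insert]
  intro hmem
  exact Nat.not_succ_le_self i (mem_filter.1 hmem).2

lemma VWF_last (E : Finset (Finset (Fin n))) (U : Finset (Fin n)) (K : ℕ) {m : ℕ}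
    (wf : Fin m → Fin n) (C0 : ℕ) (u : Fin n) :
    VWF E U K wf C0 m u = 1 := by
  unfold VWF
  rw [filter_false_of_mem, prod_empty]
  intro j _
  exact Nat.not_le.2 j.isLt


lemma log_le_div_e {x : ℝ} (hx : 0 < x) : Real.log x ≤ x / Real.exp 1 := by
  have he : (0:ℝ) < Real.exp 1 := Real.exp_pos 1
  have h2 : 0 < x / Real.exp 1 := div_pos hx he
  have h3 := Real.log_le_sub_one_of_pos h2
  rw [Real.log_div (ne_of_gt hx) (ne_of_gt he), Real.log_exp] at h3
  linarith

lemma log_bound {k m nn : ℕ} (hk : 3 ≤ k) (hn : 8 * k^6 ≤ nn)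
    (hm : (nn:ℝ) < 2 * k^5 * m) :
    Real.log nn ≤ 8/9 * m := by
  have hk3 : (3:ℝ) ≤ k := by exact_mod_cast hk
  have hk0 : (0:ℝ) < k := by linarith
  have hnpos : 0 < nn := by
    have h0 : 0 < 8 * k^6 := by positivity
    omega
  have hn0 : (0:ℝ) < nn := by exact_mod_cast hnpos
  have h8k : (8:ℝ) * k^6 ≤ nn := by exact_mod_cast hn
  have hm4k : (4:ℝ) * k < m := by nlinarith
  have hm0 : (0:ℝ) < m := by nlinarith
  have l1 : Real.log nn < Real.log (2 * (k:ℝ)^5 * m) := Real.log_lt_log hn0 hm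
  have l2 : Real.log (2 * (k:ℝ)^5 * m) = Real.log 2 + 5 * Real.log k + Real.log m := by
    rw [Real.log_mul (by positivity) (by positivity),
      Real.log_mul (by norm_num) (by positivity), Real.log_pow]
    push_cast
    ring
  have l3 : Real.log (4 * (k:ℝ)) < Real.log m := Real.log_lt_log (by positivity) hm4k
  have l4 : Real.log (4 * (k:ℝ)) = Real.log 4 + Real.log k :=
    Real.log_mul (by norm_num) (ne_of_gt hk0)
  have l5 : Real.log 4 = 2 * Real.log 2 := by
    rw [show (4:ℝ) = 2^2 by norm_num, Real.log_pow]
    push_cast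
    ring
  have l6 : Real.log m ≤ 2 * (Real.sqrt m / Real.exp 1) := by
    have h1 : Real.log (Real.sqrt m) ≤ Real.sqrt m / Real.exp 1 :=
      log_le_div_e (Real.sqrt_pos.2 hm0)
    rw [Real.log_sqrt hm0.le] at h1
    linarith
  have l7 : (2.7182818283 : ℝ) < Real.exp 1 := Real.exp_one_gt_d9
  have l8 : (0.6931471803 : ℝ) < Real.log 2 := Real.log_two_gt_d9
  have hsq : Real.sqrt m ^ 2 = m := Real.sq_sqrt hm0.le
  have hsqnn : (0:ℝ) ≤ Real.sqrt m := Real.sqrt_nonneg m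
  have l9 : Real.sqrt m / Real.exp 1 ≤ Real.sqrt m / 2.7182818283 := by
    rw [div_le_div_iff₀ (Real.exp_pos 1) (by norm_num)]
    nlinarith [l7, hsqnn]
  have l10 : Real.log nn < 6 * Real.log m - 9 * Real.log 2 := by linarith
  have l11 : Real.log nn < 12 * (Real.sqrt m / 2.7182818283) - 9 * 0.6931471803 := by
    linarith
  have l12 : Real.log nn < (120000000000/27182818283 : ℝ) * Real.sqrt m - 9 * 0.6931471803 := by
    have h2 : 12 * (Real.sqrt m / 2.7182818283) = (120000000000/27182818283 : ℝ) * Real.sqrt m := by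
      norm_num
      ring
    rw [h2] at l11
    exact l11
  nlinarith [l12, hsq, hsqnn, sq_nonneg (Real.sqrt m - 5/2)]

lemma key_ineq {k K nn m : ℕ} (hKk : k = K + 2) (hk : 3 ≤ k) {α : ℝ}
    (hα0 : 0 < α) (hα : α < ((8:ℝ)^(k-1) * (k:ℝ)^(5*(k-1)) * (Nat.factorial k))⁻¹)
    (hn : 8*k^6 ≤ nn) (hm1 : (nn:ℝ)/(2*(k:ℝ)^5) < m) :
    48 * ((K:ℝ)+1) * (α * (nn:ℝ)^(K+1)) < (m:ℝ) * (((m+1).choose K : ℕ) : ℝ) := by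
  have hk3 : (3:ℝ) ≤ k := by exact_mod_cast hk
  have hk0 : (0:ℝ) < k := by linarith
  have hnpos : 0 < nn := by
    have h0 : 0 < 8 * k^6 := by positivity
    omega
  have hn0 : (0:ℝ) < nn := by exact_mod_cast hnpos
  have h8k : (8:ℝ) * k^6 ≤ nn := by exact_mod_cast hn
  -- q
  set q : ℝ := (nn:ℝ) / (8 * (k:ℝ)^5) with hq
  have hq0 : 0 < q := by positivity
  have hqk : (k:ℝ) ≤ q := by
    rw [hq, le_div_iff₀ (by positivity)]
    nlinarith
  have hm4q : 4 * q < m := by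
    have he : 4 * q = (nn:ℝ)/(2*(k:ℝ)^5) := by
      rw [hq]
      field_simp
      ring
    rw [he]
    exact hm1
  have hm0 : (0:ℝ) < m := by nlinarith
  -- the alpha bound: α * nn^(K+1) * k! < q^(K+1)
  have hexp : k - 1 = K + 1 := by omega
  have hfac0 : (0:ℝ) < (Nat.factorial k : ℝ) := by
    exact_mod_cast Nat.factorial_pos k
  have halpha : α * (nn:ℝ)^(K+1) * (Nat.factorial k : ℝ) < q^(K+1) := by
    have h1 : ((8:ℝ)^(k-1) * (k:ℝ)^(5*(k-1)) * (Nat.factorial k)) = (8 * (k:ℝ)^5)^(K+1) * (Nat.factorial k) := by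
      rw [hexp]
      rw [mul_pow, ← pow_mul]
    have h2 : α * ((8 * (k:ℝ)^5)^(K+1) * (Nat.factorial k)) < 1 := by
      rw [← h1]
      have hpos : (0:ℝ) < (8:ℝ)^(k-1) * (k:ℝ)^(5*(k-1)) * (Nat.factorial k) := by positivity
      calc α * ((8:ℝ)^(k-1) * (k:ℝ)^(5*(k-1)) * (Nat.factorial k))
          < ((8:ℝ)^(k-1) * (k:ℝ)^(5*(k-1)) * (Nat.factorial k))⁻¹
            * ((8:ℝ)^(k-1) * (k:ℝ)^(5*(k-1)) * (Nat.factorial k)) :=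
            mul_lt_mul_of_pos_right hα hpos
        _ = 1 := inv_mul_cancel₀ (ne_of_gt hpos)
    have h3 : q^(K+1) = (nn:ℝ)^(K+1) / (8 * (k:ℝ)^5)^(K+1) := by
      rw [hq, div_pow]
    rw [h3]
    rw [lt_div_iff₀ (by positivity : (0:ℝ) < (8 * (k:ℝ)^5)^(K+1))]
    have hnn1 : (0:ℝ) < (nn:ℝ)^(K+1) := by positivity
    nlinarith [h2, hnn1]
  -- two cases
  rcases Nat.eq_or_lt_of_le (show 1 ≤ K by omega) with hK1 | hK2
  · -- K = 1, k = 3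
    have hK : K = 1 := hK1.symm
    subst hK
    have hkk : k = 3 := by omega
    subst hkk
    rw [Nat.choose_one_right]
    have hfac : (Nat.factorial 3 : ℝ) = 6 := by norm_num [Nat.factorial]
    rw [hfac] at halpha
    norm_num at halpha
    -- α nn² · 6 < q²  so 96 α nn² < 16 q² < m·m ≤ m(m+1)
    have h1 : 96 * (α * (nn:ℝ)^2) < 16 * q^2 := by nlinarith [halpha]
    have h2 : 16 * q^2 < (m:ℝ) * m := by nlinarith
    have h3 : ((m+1 : ℕ) : ℝ) = (m:ℝ) + 1 := by push_cast; ring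
    rw [h3]
    push_cast
    nlinarith
  · -- K ≥ 2
    have hKge : 2 ≤ K := hK2
    -- descFactorial lower bound : (m+2-K)^K ≤ K! * choose (m+1) K
    have hKm : K + 2 ≤ m := by
      have : (k:ℝ) ≤ q := hqk
      have h4k : 4 * (k:ℝ) ≤ 4 * q := by linarith
      have : 4 * (k:ℝ) < m := by linarith
      have : 4 * k < m := by exact_mod_cast this
      omega
    have hdesc : ((m + 2 - K : ℕ)) ^ K ≤ (Nat.factorial K) * ((m+1).choose K) := by
      have h1 := Nat.pow_sub_le_descFactorial (m+1) K
      rw [Nat.descFactorial_eq_factorial_mul_choose] at h1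
      have : m + 1 + 1 - K = m + 2 - K := by omega
      rwa [this] at h1
    have hdescR : ((m:ℝ) + 2 - K) ^ K ≤ (Nat.factorial K : ℝ) * (((m+1).choose K : ℕ) : ℝ) := by
      have hcast : ((m + 2 - K : ℕ) : ℝ) = (m:ℝ) + 2 - K := by
        have : K ≤ m + 2 := by omega
        push_cast [Nat.cast_sub this]
        ring
      calc ((m:ℝ) + 2 - K) ^ K = ((m + 2 - K : ℕ) : ℝ) ^ K := by rw [hcast]
        _ ≤ ((Nat.factorial K * ((m+1).choose K) : ℕ) : ℝ) := by
            exact_mod_cast hdesc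
        _ = (Nat.factorial K : ℝ) * (((m+1).choose K : ℕ) : ℝ) := by push_cast; ring
    -- 3q ≤ m + 2 - K
    have h3q : 3 * q ≤ (m:ℝ) + 2 - K := by
      have hKk' : (K:ℝ) + 2 = k := by exact_mod_cast hKk.symm
      nlinarith [hqk, hm4q]
    have h3q0 : (0:ℝ) ≤ 3 * q := by positivity
    have hpow : (3*q)^K ≤ ((m:ℝ) + 2 - K)^K := pow_le_pow_left₀ h3q0 h3q K
    -- numeric: 48 (K+1) K! ≤ 4 * 3^K * k!
    have hnum : 48 * ((K:ℝ)+1) * (Nat.factorial K : ℝ) ≤ 4 * 3^K * (Nat.factorial k : ℝ) := by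
      have h9 : (9:ℝ) ≤ 3^K := by
        calc (9:ℝ) = 3^2 := by norm_num
          _ ≤ 3^K := pow_le_pow_right₀ (by norm_num) hKge
      have hfck : (Nat.factorial k : ℝ) = (Nat.factorial K : ℝ) * ((K:ℝ)+1) * ((K:ℝ)+2) := by
        rw [hKk]
        rw [show K + 2 = (K+1) + 1 by ring, Nat.factorial_succ, Nat.factorial_succ]
        push_cast
        ring
      rw [hfck]
      have hKpos : (0:ℝ) < (Nat.factorial K : ℝ) := by exact_mod_cast Nat.factorial_pos K
      have hB : (4:ℝ) ≤ (K:ℝ) + 2 := by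
        have : (2:ℝ) ≤ (K:ℝ) := by exact_mod_cast hKge
        linarith
      have h36 : (36:ℝ) ≤ 3^K * ((K:ℝ)+2) := by nlinarith [h9, hB]
      have hFCpos : (0:ℝ) ≤ (Nat.factorial K : ℝ) * ((K:ℝ)+1) := by positivity
      calc 48 * ((K:ℝ)+1) * (Nat.factorial K : ℝ)
          = 48 * ((Nat.factorial K : ℝ) * ((K:ℝ)+1)) := by ring
        _ ≤ (4 * 36) * ((Nat.factorial K : ℝ) * ((K:ℝ)+1)) := by
            apply mul_le_mul_of_nonneg_right (by norm_num) hFCpos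
        _ ≤ 4 * (3^K * ((K:ℝ)+2)) * ((Nat.factorial K : ℝ) * ((K:ℝ)+1)) := by
            apply mul_le_mul_of_nonneg_right _ hFCpos
            nlinarith [h36]
        _ = 4 * 3^K * ((Nat.factorial K : ℝ) * ((K:ℝ)+1) * ((K:ℝ)+2)) := by ring
    -- assemble
    have hfacK0 : (0:ℝ) < (Nat.factorial K : ℝ) := by exact_mod_cast Nat.factorial_pos K
    have hqK0 : (0:ℝ) < q^K := by positivity
    -- 48(K+1) α nn^{K+1} < 48(K+1) q^{K+1}/k!  < 4 q (3q)^K / K! ≤ m (m+2-K)^K / K! ≤ m * C0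
    have step1 : 48 * ((K:ℝ)+1) * (α * (nn:ℝ)^(K+1)) * ((Nat.factorial k : ℝ) * (Nat.factorial K : ℝ))
        < 4 * q * (3*q)^K * (Nat.factorial k : ℝ) := by
      have e1 : (3*q)^K = 3^K * q^K := by rw [mul_pow]
      have e2 : q^(K+1) = q * q^K := by ring
      have h48 : (0:ℝ) < 48 * ((K:ℝ)+1) := by positivity
      -- LHS = (48(K+1) K!) * (α nn^{K+1} k!) < (4·3^K·k!) * q^{K+1} = 4 q (3q)^K k!
      calc 48 * ((K:ℝ)+1) * (α * (nn:ℝ)^(K+1)) * ((Nat.factorial k : ℝ) * (Nat.factorial K : ℝ))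
          = (48 * ((K:ℝ)+1) * (Nat.factorial K : ℝ)) * (α * (nn:ℝ)^(K+1) * (Nat.factorial k : ℝ)) := by ring
        _ < (48 * ((K:ℝ)+1) * (Nat.factorial K : ℝ)) * q^(K+1) := by
            apply mul_lt_mul_of_pos_left halpha
            have hKfac : (0:ℝ) < (Nat.factorial K : ℝ) := by
              exact_mod_cast Nat.factorial_pos K
            have : (0:ℝ) < 48 * ((K:ℝ)+1) := by positivity
            nlinarith [hKfac, this]
        _ ≤ (4 * 3^K * (Nat.factorial k : ℝ)) * q^(K+1) := by
            apply mul_le_mul_of_nonneg_right hnum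
            positivity
        _ = 4 * q * (3*q)^K * (Nat.factorial k : ℝ) := by
            rw [e1, e2]
            ring
    have step2 : 4 * q * (3*q)^K ≤ (m:ℝ) * ((m:ℝ) + 2 - K)^K := by
      have h1 : 4 * q * (3*q)^K ≤ (m:ℝ) * (3*q)^K := by
        apply mul_le_mul_of_nonneg_right (by linarith) (by positivity)
      calc 4 * q * (3*q)^K ≤ (m:ℝ) * (3*q)^K := h1
        _ ≤ (m:ℝ) * ((m:ℝ) + 2 - K)^K := by
            apply mul_le_mul_of_nonneg_left hpow hm0.le
    have step3 : (m:ℝ) * ((m:ℝ) + 2 - K)^K ≤ (m:ℝ) * ((Nat.factorial K : ℝ) * (((m+1).choose K : ℕ) : ℝ)) := by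
      apply mul_le_mul_of_nonneg_left hdescR hm0.le
    -- combine and cancel k! K!
    have hfpos : (0:ℝ) < (Nat.factorial k : ℝ) * (Nat.factorial K : ℝ) := by positivity
    have final : 48 * ((K:ℝ)+1) * (α * (nn:ℝ)^(K+1)) * ((Nat.factorial k : ℝ) * (Nat.factorial K : ℝ))
        < ((m:ℝ) * (((m+1).choose K : ℕ) : ℝ)) * ((Nat.factorial k : ℝ) * (Nat.factorial K : ℝ)) := by
      calc 48 * ((K:ℝ)+1) * (α * (nn:ℝ)^(K+1)) * ((Nat.factorial k : ℝ) * (Nat.factorial K : ℝ))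
          < 4 * q * (3*q)^K * (Nat.factorial k : ℝ) := step1
        _ ≤ ((m:ℝ) * ((Nat.factorial K : ℝ) * (((m+1).choose K : ℕ) : ℝ))) * (Nat.factorial k : ℝ) := by
            apply mul_le_mul_of_nonneg_right (le_trans step2 step3) hfac0.le
        _ = ((m:ℝ) * (((m+1).choose K : ℕ) : ℝ)) * ((Nat.factorial k : ℝ) * (Nat.factorial K : ℝ)) := by ring
    exact lt_of_mul_lt_mul_right final hfpos.le


set_option maxHeartbeats 2000000 in
lemma build {E : Finset (Finset (Fin n))} {U : Finset (Fin n)} {K m : ℕ}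
    (hKm : K ≤ m)
    (wf : Fin m → Fin n)
    (hUbig : K * (m - 1) + (m + 1) ≤ U.card)
    {C0 : ℕ} (hC0 : C0 = (m+1).choose K)
    (hkey : ∀ j : Fin m, 48 * (K+1) * ((BadTF E U K (wf j)).card : ℝ) < (m : ℝ) * C0) :
    ∃ g : Fin m → Finset (Fin n),
      (∀ j, g j ⊆ U) ∧ (∀ j, (g j).card = K) ∧
      (∀ j, 12 * DcntF E U (wf j) (g j) ≤ m) ∧
      (∀ j j', j ≠ j' → Disjoint (g j) (g j')) ∧
      (∀ u ∈ U, Real.exp (LcntF E wf g m u) ≤ ∑ u' ∈ U, VWF E U K wf C0 0 u') := by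
  classical
  have hC0pos : 0 < C0 := by
    rw [hC0]; exact Nat.choose_pos (by omega)
  have key : ∀ i, i ≤ m → ∃ g : Fin m → Finset (Fin n),
      (∀ j : Fin m, (j:ℕ) < i → (g j ⊆ U ∧ (g j).card = K ∧ 12 * DcntF E U (wf j) (g j) ≤ m)) ∧
      (∀ j : Fin m, i ≤ (j:ℕ) → g j = ∅) ∧
      (∀ j j' : Fin m, j ≠ j' → Disjoint (g j) (g j')) ∧
      ((∑ u ∈ U, Real.exp (LcntF E wf g i u) * VWF E U K wf C0 i u)
          ≤ ∑ u ∈ U, VWF E U K wf C0 0 u) := by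
    intro i
    induction i with
    | zero =>
      intro _
      refine ⟨fun _ => ∅, fun j h => absurd h (by omega), fun j _ => rfl,
        fun j j' _ => disjoint_empty_left _, ?_⟩
      apply le_of_eq
      apply Finset.sum_congr rfl
      intro u _
      have hL : LcntF E wf (fun _ => ∅) 0 u = 0 := by
        unfold LcntF
        rw [card_eq_zero, filter_false_of_mem]
        intro j _
        simp
      rw [hL]
      norm_num
    | succ i ih =>
      intro hi1
      have him : i < m := by omega
      obtain ⟨g, hg1, hg2, hg3, hg4⟩ := ih (by omega)
      have hUsedU : (univ : Finset (Fin m)).biUnion g ⊆ U := by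
        intro x hx
        rw [mem_biUnion] at hx
        obtain ⟨j, _, hj⟩ := hx
        by_cases h : (j:ℕ) < i
        · exact (hg1 j h).1 hj
        · rw [hg2 j (by omega)] at hj
          exact absurd hj (notMem_empty x)
      have hUsedCard : ((univ : Finset (Fin m)).biUnion g).card ≤ K * i := by
        calc ((univ : Finset (Fin m)).biUnion g).card ≤ ∑ j : Fin m, (g j).card :=
              card_biUnion_le
          _ ≤ ∑ j : Fin m, (if (j:ℕ) < i then K else 0) := by
              apply sum_le_sum
              intro j _
              by_cases h : (j:ℕ) < i
              · rw [if_pos h]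
                exact le_of_eq (hg1 j h).2.1
              · rw [if_neg h, hg2 j (by omega)]
                simp
          _ = ∑ j ∈ (univ : Finset (Fin m)).filter (fun j : Fin m => (j:ℕ) < i), K :=
              (sum_filter _ _).symm
          _ = ((univ : Finset (Fin m)).filter (fun j : Fin m => (j:ℕ) < i)).card * K := by
              rw [sum_const, smul_eq_mul]
          _ ≤ i * K := by
              apply Nat.mul_le_mul_right
              have h1 := card_le_card_of_injOn (f := fun j : Fin m => (j:ℕ))
                (s := (univ : Finset (Fin m)).filter (fun j : Fin m => (j:ℕ) < i))
                (t := Finset.range i)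
                (by intro j hj; rw [mem_coe] at hj ⊢; rw [mem_range]; exact (mem_filter.1 hj).2)
                (by intro a _ b _ hab; exact Fin.ext hab)
              rwa [card_range] at h1
          _ = K * i := Nat.mul_comm _ _
      have hFreeCard : m + 1 ≤ (U \ (univ : Finset (Fin m)).biUnion g).card := by
        rw [card_sdiff_of_subset hUsedU]
        have h1 : K * i ≤ K * (m - 1) := Nat.mul_le_mul_left K (by omega)
        omega
      set Free : Finset (Fin n) := U \ (univ : Finset (Fin m)).biUnion g with hFreeDef
      set CC : Finset (Finset (Fin n)) :=
        (Free.powersetCard K).filter (fun S => 12 * DcntF E U (wf ⟨i, him⟩) S ≤ m) with hCC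
      set Bad : Finset (Finset (Fin n)) :=
        (Free.powersetCard K).filter (fun S => ¬ (12 * DcntF E U (wf ⟨i, him⟩) S ≤ m)) with hBadDef
      have hAllsplit : CC.card + Bad.card = (Free.card).choose K := by
        rw [hCC, hBadDef, card_filter_add_card_filter_not, card_powersetCard]
      have hAllge : C0 ≤ (Free.card).choose K := by
        rw [hC0]
        exact Nat.choose_le_choose K hFreeCard
      have hFreeU : Free ⊆ U := sdiff_subset
      have hBadCount : m * Bad.card ≤ 12 * ((K+1) * (BadTF E U K (wf ⟨i, him⟩)).card) := by
        calc m * Bad.card = ∑ _S ∈ Bad, m := by rw [sum_const, smul_eq_mul, mul_comm]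
          _ ≤ ∑ S ∈ Bad, 12 * DcntF E U (wf ⟨i, him⟩) S := by
              apply sum_le_sum
              intro S hS
              rw [hBadDef, mem_filter] at hS
              omega
          _ ≤ ∑ S ∈ Free.powersetCard K, 12 * DcntF E U (wf ⟨i, him⟩) S := by
              apply sum_le_sum_of_subset
              rw [hBadDef]
              exact filter_subset _ _
          _ = 12 * ∑ S ∈ Free.powersetCard K, DcntF E U (wf ⟨i, him⟩) S := by
              rw [mul_sum]
          _ ≤ 12 * ((K+1) * (BadTF E U K (wf ⟨i, him⟩)).card) :=
              Nat.mul_le_mul_left 12 (sum_Dcnt_le (wf ⟨i, him⟩) hFreeU)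
      have hm0 : 0 < m := by omega
      have h4Bad : 4 * Bad.card < C0 := by
        have h0 : ((m : ℝ)) * (Bad.card : ℝ) ≤ 12 * ((K:ℝ)+1) * ((BadTF E U K (wf ⟨i, him⟩)).card : ℝ) := by
          have := hBadCount
          have h0' : ((m * Bad.card : ℕ) : ℝ) ≤ ((12 * ((K+1) * (BadTF E U K (wf ⟨i, him⟩)).card) : ℕ) : ℝ) :=
            Nat.cast_le.2 this
          push_cast at h0'
          linarith
        have h3 : ((m:ℝ)) * (4 * (Bad.card:ℝ)) < (m:ℝ) * C0 := by
          calc ((m:ℝ)) * (4 * (Bad.card:ℝ)) = 4 * ((m:ℝ) * Bad.card) := by ring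
            _ ≤ 4 * (12 * ((K:ℝ)+1) * ((BadTF E U K (wf ⟨i, him⟩)).card : ℝ)) := by linarith
            _ = 48 * ((K:ℝ)+1) * ((BadTF E U K (wf ⟨i, him⟩)).card : ℝ) := by ring
            _ < (m : ℝ) * C0 := by
                have := hkey ⟨i, him⟩
                push_cast at this ⊢
                linarith
        have hm0R : (0:ℝ) < m := by exact_mod_cast hm0
        have h4 : (4 * (Bad.card:ℝ)) < (C0 : ℝ) := lt_of_mul_lt_mul_left h3 hm0R.le
        exact_mod_cast h4
      have h3C0 : 3 * C0 < 4 * CC.card := by omega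
      have hCCne : CC.Nonempty := card_pos.1 (by omega)
      -- the averaging step
      have havg : ∑ S ∈ CC, (∑ u ∈ U, Real.exp (LcntF E wf (Function.update g ⟨i, him⟩ S) (i+1) u)
            * VWF E U K wf C0 (i+1) u)
          ≤ ∑ _S ∈ CC, (∑ u ∈ U, Real.exp (LcntF E wf g i u) * VWF E U K wf C0 i u) := by
        rw [sum_const, nsmul_eq_mul, Finset.sum_comm, mul_sum]
        apply sum_le_sum
        intro u _
        have hLnew : ∀ S ∈ CC, ((LcntF E wf (Function.update g ⟨i, him⟩ S) (i+1) u : ℕ) : ℝ)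
            = ((LcntF E wf g i u : ℕ) : ℝ)
              + (if (u ∉ S ∧ edgeF (wf ⟨i, him⟩) u S ∉ E) then (1:ℝ) else 0) := by
          intro S _
          have e1 := Lcnt_succ (E := E) wf (Function.update g ⟨i, him⟩ S) him u
          rw [Function.update_self] at e1
          have e2 : LcntF E wf (Function.update g ⟨i, him⟩ S) i u = LcntF E wf g i u := by
            refine (Lcnt_congr wf u ?_).symm
            intro j hj
            have hne : j ≠ (⟨i, him⟩ : Fin m) := by
              intro h
              rw [h] at hj
              exact Nat.lt_irrefl i hj
            rw [Function.update_of_ne hne]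
          rw [e1, e2]
          split_ifs with h
          · push_cast; ring
          · push_cast; ring
        have hexp : ∀ S ∈ CC, Real.exp (LcntF E wf (Function.update g ⟨i, him⟩ S) (i+1) u)
            = Real.exp (LcntF E wf g i u)
              * (if (u ∉ S ∧ edgeF (wf ⟨i, him⟩) u S ∉ E) then Real.exp 1 else 1) := by
          intro S hS
          rw [hLnew S hS]
          split_ifs with h
          · rw [Real.exp_add]
          · rw [add_zero, mul_one]
        have hcnt : (CC.filter (fun S => u ∉ S ∧ edgeF (wf ⟨i, him⟩) u S ∉ E)).card
            ≤ AcntF E U K (wf ⟨i, him⟩) u := by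
          apply card_le_card
          intro S hS
          rw [mem_filter] at hS
          obtain ⟨hS1, hS2, hS3⟩ := hS
          rw [hCC, mem_filter, mem_powersetCard] at hS1
          rw [mem_filter, mem_powersetCard]
          refine ⟨⟨?_, hS1.1.2⟩, hS3⟩
          intro x hx
          rw [mem_sdiff, mem_singleton]
          exact ⟨hFreeU (hS1.1.1 hx), fun hxu => hS2 (hxu ▸ hx)⟩
        have hsum1 : ∑ S ∈ CC, Real.exp (LcntF E wf (Function.update g ⟨i, him⟩ S) (i+1) u)
              * VWF E U K wf C0 (i+1) u
            = (Real.exp (LcntF E wf g i u) * VWF E U K wf C0 (i+1) u)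
              * (∑ S ∈ CC, (if (u ∉ S ∧ edgeF (wf ⟨i, him⟩) u S ∉ E) then Real.exp 1 else 1)) := by
          rw [mul_sum]
          apply sum_congr rfl
          intro S hS
          rw [hexp S hS]
          ring
        have hsum2 : ∑ S ∈ CC, (if (u ∉ S ∧ edgeF (wf ⟨i, him⟩) u S ∉ E) then Real.exp 1 else 1)
            ≤ (CC.card : ℝ) + (Real.exp 1 - 1) * (AcntF E U K (wf ⟨i, him⟩) u) := by
          rw [sum_ite, sum_const, sum_const, nsmul_eq_mul, nsmul_eq_mul, mul_one]
          have hsplit := card_filter_add_card_filter_not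
            (s := CC) (p := fun S => u ∉ S ∧ edgeF (wf ⟨i, him⟩) u S ∉ E)
          have h1 : ((CC.filter (fun S => u ∉ S ∧ edgeF (wf ⟨i, him⟩) u S ∉ E)).card : ℝ)
              ≤ (AcntF E U K (wf ⟨i, him⟩) u : ℝ) := Nat.cast_le.2 hcnt
          have h2 : ((CC.filter (fun S => u ∉ S ∧ edgeF (wf ⟨i, him⟩) u S ∉ E)).card : ℝ)
              + ((CC.filter (fun S => ¬(u ∉ S ∧ edgeF (wf ⟨i, him⟩) u S ∉ E))).card : ℝ)
              = (CC.card : ℝ) := by exact_mod_cast congrArg (Nat.cast : ℕ → ℝ) hsplit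
          have he := exp_one_sub_one_nonneg
          nlinarith [h1, h2, he]
        have hVp := VWF_succ E U K wf C0 him u
        have hVnn : (0:ℝ) ≤ VWF E U K wf C0 (i+1) u :=
          le_trans zero_le_one (VWF_one_le E U K wf C0 (i+1) u)
        have hexpnn : (0:ℝ) ≤ Real.exp (LcntF E wf g i u) := (Real.exp_pos _).le
        have hC0R : (0:ℝ) < C0 := by exact_mod_cast hC0pos
        have h34 : 3 * (C0:ℝ) ≤ 4 * (CC.card:ℝ) := by exact_mod_cast le_of_lt h3C0
        have hAnn : (0:ℝ) ≤ (AcntF E U K (wf ⟨i, him⟩) u : ℝ) := Nat.cast_nonneg _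
        have hcnn : (0:ℝ) ≤ Real.exp 1 - 1 := exp_one_sub_one_nonneg
        have hmain : (CC.card : ℝ) + (Real.exp 1 - 1) * (AcntF E U K (wf ⟨i, him⟩) u)
            ≤ (CC.card:ℝ) * (1 + (Real.exp 1 - 1)
                * (4 * (AcntF E U K (wf ⟨i, him⟩) u) / (3 * C0))) := by
          have e1 : (CC.card:ℝ) * (1 + (Real.exp 1 - 1)
                * (4 * (AcntF E U K (wf ⟨i, him⟩) u) / (3 * C0)))
              = (CC.card:ℝ) + ((Real.exp 1 - 1) * (AcntF E U K (wf ⟨i, him⟩) u))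
                * ((4 * (CC.card:ℝ)) / (3 * C0)) := by
            field_simp
          rw [e1]
          have e2 : (1:ℝ) ≤ (4 * (CC.card:ℝ)) / (3 * C0) := by
            rw [le_div_iff₀ (by positivity : (0:ℝ) < 3 * (C0:ℝ))]
            linarith
          have e3 := le_mul_of_one_le_right (mul_nonneg hcnn hAnn) e2
          linarith
        calc ∑ S ∈ CC, Real.exp (LcntF E wf (Function.update g ⟨i, him⟩ S) (i+1) u)
              * VWF E U K wf C0 (i+1) u
            = (Real.exp (LcntF E wf g i u) * VWF E U K wf C0 (i+1) u)
              * (∑ S ∈ CC, (if (u ∉ S ∧ edgeF (wf ⟨i, him⟩) u S ∉ E) then Real.exp 1 else 1)) :=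
              hsum1
          _ ≤ (Real.exp (LcntF E wf g i u) * VWF E U K wf C0 (i+1) u)
              * ((CC.card:ℝ) * (1 + (Real.exp 1 - 1)
                * (4 * (AcntF E U K (wf ⟨i, him⟩) u) / (3 * C0)))) := by
              apply mul_le_mul_of_nonneg_left (le_trans hsum2 hmain)
                (mul_nonneg hexpnn hVnn)
          _ = (CC.card:ℝ) * (Real.exp (LcntF E wf g i u) * VWF E U K wf C0 i u) := by
              rw [hVp]
              ring
      obtain ⟨S, hSCC, hSle⟩ := Finset.exists_le_of_sum_le hCCne havg
      have hSmem := hSCC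
      rw [hCC, mem_filter, mem_powersetCard] at hSmem
      refine ⟨Function.update g ⟨i, him⟩ S, ?_, ?_, ?_, ?_⟩
      · intro j hj
        by_cases h : (j:ℕ) < i
        · have hne : j ≠ ⟨i, him⟩ := by
            intro hh
            rw [hh] at h
            exact Nat.lt_irrefl i h
          rw [Function.update_of_ne hne]
          exact hg1 j h
        · have hj' : j = ⟨i, him⟩ := Fin.ext (show (j:ℕ) = i by omega)
          rw [hj', Function.update_self]
          exact ⟨hSmem.1.1.trans hFreeU, hSmem.1.2, hSmem.2⟩
      · intro j hj
        have hne : j ≠ ⟨i, him⟩ := by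
          intro hh
          rw [hh] at hj
          exact Nat.not_succ_le_self i hj
        rw [Function.update_of_ne hne]
        exact hg2 j (by omega)
      · intro j j' hjj
        have hdisjS : ∀ j'' : Fin m, j'' ≠ ⟨i, him⟩ → Disjoint S (Function.update g ⟨i, him⟩ S j'') := by
          intro j'' hne
          rw [Function.update_of_ne hne]
          rw [disjoint_left]
          intro x hxS hxg
          have hxFree := hSmem.1.1 hxS
          rw [hFreeDef, mem_sdiff] at hxFree
          exact hxFree.2 (mem_biUnion.2 ⟨j'', mem_univ _, hxg⟩)
        by_cases h1 : j = ⟨i, him⟩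
        · subst h1
          rw [Function.update_self]
          have h2 : j' ≠ (⟨i, him⟩ : Fin m) := fun hh => hjj (hh ▸ rfl)
          have := hdisjS j' h2
          rwa [Function.update_of_ne h2] at this ⊢
        · rw [Function.update_of_ne h1]
          by_cases h2 : j' = ⟨i, him⟩
          · subst h2
            rw [Function.update_self]
            have := hdisjS j h1
            rw [Function.update_of_ne h1] at this
            exact this.symm
          · rw [Function.update_of_ne h2]
            exact hg3 j j' hjj
      · exact le_trans hSle hg4
  obtain ⟨g, hg1, hg2, hg3, hg4⟩ := key m le_rfl
  refine ⟨g, fun j => (hg1 j j.isLt).1, fun j => (hg1 j j.isLt).2.1,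
    fun j => (hg1 j j.isLt).2.2, hg3, ?_⟩
  intro u hu
  have h1 : (∑ u' ∈ U, Real.exp (LcntF E wf g m u') * VWF E U K wf C0 m u')
      = ∑ u' ∈ U, Real.exp (LcntF E wf g m u') := by
    apply sum_congr rfl
    intro u' _
    rw [VWF_last, mul_one]
  calc Real.exp (LcntF E wf g m u) ≤ ∑ u' ∈ U, Real.exp (LcntF E wf g m u') :=
        single_le_sum (f := fun u' => Real.exp (LcntF E wf g m u'))
          (fun u' _ => (Real.exp_pos _).le) hu
    _ = ∑ u' ∈ U, Real.exp (LcntF E wf g m u') * VWF E U K wf C0 m u' := h1.symm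
    _ ≤ ∑ u' ∈ U, VWF E U K wf C0 0 u' := hg4


end Stmt13

open Stmt13

set_option maxHeartbeats 2000000 in
theorem stmt13 (k l n m : ℕ) (α : ℝ) (hk : 3 ≤ k) (hl : 1 ≤ l) (hlk : l ≤ k - 1)
    (hα0 : 0 < α)
    (hα : α < ((8 : ℝ) ^ (k - 1) * (k : ℝ) ^ (5 * (k - 1)) * Nat.factorial k)⁻¹)
    (hn : 8 * k ^ 6 ≤ n) (hm1 : (n : ℝ) / (2 * (k : ℝ) ^ 5) < (m : ℝ))
    (hm2 : (m : ℝ) ≤ (n : ℝ) / k)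
    (E : Finset (Finset (Fin n))) (hunif : ∀ e ∈ E, e.card = k)
    (W : Finset (Fin n)) (hW : W.card = m)
    (hgood : ∀ v : Fin n,
      (((linkF (Hkkl n k l W) k v) \ (linkF E k v)).card : ℝ) ≤ α * (n : ℝ) ^ (k - 1)) :
    ∃ M ⊆ E, IsMatchingF M ∧ M.card = m := by
  classical
  obtain ⟨K, rfl⟩ : ∃ K, k = K + 2 := ⟨k - 2, by omega⟩
  have hK1 : 1 ≤ K := by omega
  have hnpos : 0 < n := by
    have h0 : 0 < 8 * (K+2)^6 := by positivity
    omega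
  have hn0R : (0:ℝ) < n := by exact_mod_cast hnpos
  have hk0R : (0:ℝ) < ((K+2:ℕ):ℝ) := by positivity
  have hkmn : (K+2) * m ≤ n := by
    rw [le_div_iff₀ hk0R] at hm2
    have h1 : ((m * (K+2) : ℕ) : ℝ) ≤ (n:ℝ) := by push_cast; push_cast at hm2; linarith
    have h2 : m * (K+2) ≤ n := by exact_mod_cast h1
    have h3 : (K+2) * m = m * (K+2) := Nat.mul_comm _ _
    omega
  have hnm : (n:ℝ) < 2 * ((K+2:ℕ):ℝ)^5 * m := by
    rw [div_lt_iff₀ (by positivity)] at hm1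
    linarith
  have hm4k : 4 * (K+2) < m := by
    have h1 : (8:ℝ) * ((K+2:ℕ):ℝ)^6 ≤ (n:ℝ) := by exact_mod_cast hn
    have h2 : (4:ℝ) * ((K+2:ℕ):ℝ) < m := by nlinarith
    have h3 : ((4 * (K+2) : ℕ) : ℝ) < (m:ℝ) := by push_cast; push_cast at h2; linarith
    exact_mod_cast h3
  have hm0 : 0 < m := by omega
  set U : Finset (Fin n) := (univ : Finset (Fin n)) \ W with hU
  set wf : Fin m → Fin n := fun j => ((W.orderIsoOfFin hW) j : Fin n) with hwf
  have hwfW : ∀ j, wf j ∈ W := fun j => ((W.orderIsoOfFin hW) j).2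
  have hwfInj : Function.Injective wf := by
    intro a b hab
    exact (W.orderIsoOfFin hW).injective (Subtype.coe_injective hab)
  have hUcard : U.card = n - m := by
    rw [hU, card_sdiff_of_subset (subset_univ W), card_univ, Fintype.card_fin, hW]
  have hUW : ∀ x ∈ U, x ∉ W := by
    intro x hx
    rw [hU, mem_sdiff] at hx
    exact hx.2
  have hβ : ∀ v : Fin n, (((linkF (Hkkl n (K+2) l W) (K+2) v) \ (linkF E (K+2) v)).card : ℝ)
      ≤ α * (n:ℝ)^(K+1) := by
    intro v
    have h := hgood v
    have he : (K+2) - 1 = K + 1 := rfl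
    rwa [he] at h
  set C0 : ℕ := (m+1).choose K with hC0
  have hC0pos : 0 < C0 := by
    rw [hC0]; exact Nat.choose_pos (by omega)
  have hC0R : (0:ℝ) < (C0:ℝ) := by exact_mod_cast hC0pos
  have hkeyR : 48 * ((K:ℝ)+1) * (α * (n:ℝ)^(K+1)) < (m:ℝ) * (C0:ℝ) := by
    rw [hC0]
    exact key_ineq rfl hk hα0 hα hn hm1
  have hlK : l ≤ K + 1 := by omega
  have hkey : ∀ j : Fin m, 48 * ((K:ℝ)+1) * ((BadTF E U K (wf j)).card : ℝ) < (m : ℝ) * C0 := by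
    intro j
    have h2 := badT_card_le (E := E) (W := W) (K := K) hl hlK (hwfW j)
    have h1 : ((BadTF E U K (wf j)).card : ℝ) ≤ α * (n:ℝ)^(K+1) := by
      rw [hU]
      calc ((BadTF E (univ \ W) K (wf j)).card : ℝ)
          ≤ (((linkF (Hkkl n (K+2) l W) (K+2) (wf j)) \ (linkF E (K+2) (wf j))).card : ℝ) :=
            Nat.cast_le.2 h2
        _ ≤ α * (n:ℝ)^(K+1) := hβ (wf j)
    calc 48 * ((K:ℝ)+1) * ((BadTF E U K (wf j)).card : ℝ)
        ≤ 48 * ((K:ℝ)+1) * (α * (n:ℝ)^(K+1)) := by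
          apply mul_le_mul_of_nonneg_left h1 (by positivity)
      _ < (m:ℝ) * C0 := hkeyR
  have hUbig : K * (m - 1) + (m + 1) ≤ U.card := by
    rw [hUcard]
    have e1 : K * m = K * (m-1) + K := by
      have h9 : m - 1 + 1 = m := by omega
      conv_lhs => rw [← h9]
      ring
    have e2 : (K+2) * m = K * m + 2 * m := by ring
    omega
  obtain ⟨g, hg1, hg2, hg3, hg4, hg5⟩ := build (by omega : K ≤ m) wf hUbig hC0 hkey
  -- the load bound
  have hload : ∀ u ∈ U, ((LcntF E wf g m u : ℕ) : ℝ) < 11/12 * m := by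
    intro u hu
    have h1 := hg5 u hu
    have hVle : ∀ u' ∈ U, VWF E U K wf C0 0 u'
        ≤ Real.exp ((Real.exp 1 - 1) * (4 * (α * (n:ℝ)^(K+1)) / (3 * C0))) := by
      intro u' hu'
      have hAsum : ((∑ j : Fin m, AcntF E U K (wf j) u' : ℕ) : ℝ) ≤ α * (n:ℝ)^(K+1) := by
        have hs := sum_Acnt_le (E := E) (K := K) hl hlK wf hwfW hwfInj (hUW u' hu')
        rw [hU]
        calc ((∑ j : Fin m, AcntF E (univ \ W) K (wf j) u' : ℕ) : ℝ)
            ≤ (((linkF (Hkkl n (K+2) l W) (K+2) u') \ (linkF E (K+2) u')).card : ℝ) :=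
              Nat.cast_le.2 hs
          _ ≤ α * (n:ℝ)^(K+1) := hβ u'
      have hc : (0:ℝ) ≤ Real.exp 1 - 1 := exp_one_sub_one_nonneg
      calc VWF E U K wf C0 0 u'
          = ∏ j ∈ (univ : Finset (Fin m)).filter (fun j : Fin m => 0 ≤ (j : ℕ)),
              (1 + (Real.exp 1 - 1) * (4 * (AcntF E U K (wf j) u') / (3 * C0))) := rfl
        _ = ∏ j : Fin m,
              (1 + (Real.exp 1 - 1) * (4 * (AcntF E U K (wf j) u') / (3 * C0))) := by
            rw [filter_true_of_mem (fun j _ => Nat.zero_le _)]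
        _ ≤ ∏ j : Fin m,
              Real.exp ((Real.exp 1 - 1) * (4 * (AcntF E U K (wf j) u') / (3 * C0))) := by
            apply prod_le_prod
            · intro j _
              have h9 : (0:ℝ) ≤ (Real.exp 1 - 1) * (4 * (AcntF E U K (wf j) u') / (3 * C0)) := by
                apply mul_nonneg hc
                positivity
              linarith
            · intro j _
              have h9 := Real.add_one_le_exp
                ((Real.exp 1 - 1) * (4 * (AcntF E U K (wf j) u') / (3 * C0)))
              linarith
        _ = Real.exp (∑ j : Fin m,
              (Real.exp 1 - 1) * (4 * (AcntF E U K (wf j) u') / (3 * C0))) :=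
            (Real.exp_sum _ _).symm
        _ ≤ Real.exp ((Real.exp 1 - 1) * (4 * (α * (n:ℝ)^(K+1)) / (3 * C0))) := by
            apply Real.exp_le_exp.2
            have e1 : ∑ j : Fin m, (Real.exp 1 - 1) * (4 * (AcntF E U K (wf j) u') / (3 * C0))
                = (Real.exp 1 - 1)
                  * (4 * ((∑ j : Fin m, AcntF E U K (wf j) u' : ℕ) : ℝ) / (3 * C0)) := by
              rw [← mul_sum]
              congr 1
              rw [← sum_div, ← mul_sum]
              congr 2
              push_cast
              rfl
            rw [e1]
            apply mul_le_mul_of_nonneg_left _ hc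
            rw [div_le_div_iff₀ (by positivity) (by positivity)]
            nlinarith [hAsum, hC0R]
    have hsumV : ∑ u' ∈ U, VWF E U K wf C0 0 u'
        ≤ (n:ℝ) * Real.exp ((Real.exp 1 - 1) * (4 * (α * (n:ℝ)^(K+1)) / (3 * C0))) := by
      calc ∑ u' ∈ U, VWF E U K wf C0 0 u'
          ≤ ∑ _u' ∈ U, Real.exp ((Real.exp 1 - 1) * (4 * (α * (n:ℝ)^(K+1)) / (3 * C0))) :=
            sum_le_sum hVle
        _ = (U.card : ℝ) * Real.exp ((Real.exp 1 - 1) * (4 * (α * (n:ℝ)^(K+1)) / (3 * C0))) := by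
            rw [sum_const, nsmul_eq_mul]
        _ ≤ (n:ℝ) * Real.exp ((Real.exp 1 - 1) * (4 * (α * (n:ℝ)^(K+1)) / (3 * C0))) := by
            apply mul_le_mul_of_nonneg_right _ (Real.exp_pos _).le
            have h9 : U.card ≤ n := by rw [hUcard]; omega
            exact_mod_cast h9
    have hc2 : Real.exp 1 - 1 < 2 := by
      have h9 := Real.exp_one_lt_d9
      norm_num at h9 ⊢
      linarith
    have hx36 : (Real.exp 1 - 1) * (4 * (α * (n:ℝ)^(K+1)) / (3 * C0)) < (m:ℝ)/36 := by
      have hβpos : (0:ℝ) < α * (n:ℝ)^(K+1) := by positivity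
      have hK2R : (2:ℝ) ≤ (K:ℝ) + 1 := by
        have h9 : (1:ℝ) ≤ (K:ℝ) := by exact_mod_cast hK1
        linarith
      have h96 : 96 * (α * (n:ℝ)^(K+1)) < (m:ℝ) * C0 := by nlinarith [hkeyR, hβpos, hK2R]
      have hdiv : 4 * (α * (n:ℝ)^(K+1)) / (3 * C0) < (m:ℝ)/72 := by
        rw [div_lt_div_iff₀ (by positivity) (by norm_num)]
        nlinarith [h96, hC0R]
      have hge0 : (0:ℝ) ≤ 4 * (α * (n:ℝ)^(K+1)) / (3 * C0) := by positivity
      nlinarith [exp_one_sub_one_nonneg, hc2, hdiv, hge0]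
    have hlog : Real.log n ≤ 8/9 * m := log_bound hk hn hnm
    have hfin : (n:ℝ) * Real.exp ((Real.exp 1 - 1) * (4 * (α * (n:ℝ)^(K+1)) / (3 * C0)))
        < Real.exp (11/12 * m) := by
      nth_rewrite 1 [← Real.exp_log hn0R]
      rw [← Real.exp_add]
      apply Real.exp_lt_exp.2
      linarith
    have hfin2 : Real.exp (LcntF E wf g m u) < Real.exp (11/12 * m) :=
      lt_of_le_of_lt (le_trans h1 hsumV) hfin
    exact Real.exp_lt_exp.1 hfin2
  -- the leftover pool X and Hall's theorem
  have hgUnion : (univ : Finset (Fin m)).biUnion g ⊆ U := by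
    intro x hx
    rw [mem_biUnion] at hx
    obtain ⟨j, _, hj⟩ := hx
    exact hg1 j hj
  set X : Finset (Fin n) := U \ (univ : Finset (Fin m)).biUnion g with hX
  have hbcard : ((univ : Finset (Fin m)).biUnion g).card = m * K := by
    rw [card_biUnion (fun j _ j' _ hne => hg4 j j' hne)]
    rw [sum_congr rfl (fun j _ => hg2 j), sum_const, card_univ, Fintype.card_fin, smul_eq_mul]
  have hXcard : X.card = n - m - m * K := by
    rw [hX, card_sdiff_of_subset hgUnion, hUcard, hbcard]
  have hXm : m ≤ X.card := by
    have e2 : (K+2) * m = m * K + 2 * m := by ring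
    omega
  have hXU : X ⊆ U := sdiff_subset
  set N : Fin m → Finset (Fin n) := fun j => X.filter (fun u => edgeF (wf j) u (g j) ∈ E) with hN
  have hNX : ∀ j, N j ⊆ X := fun j => filter_subset _ _
  have hNcard : ∀ j : Fin m, (X.card : ℝ) - (m:ℝ)/12 ≤ ((N j).card : ℝ) := by
    intro j
    have hsub : X \ N j ⊆ (U \ g j).filter (fun u => edgeF (wf j) u (g j) ∉ E) := by
      intro u hu
      rw [mem_sdiff] at hu
      obtain ⟨huX, huN⟩ := hu
      rw [hN, mem_filter] at huN
      push_neg at huN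
      rw [mem_filter, mem_sdiff]
      have huU : u ∈ U := hXU huX
      have hug : u ∉ g j := by
        intro hmem
        rw [hX, mem_sdiff] at huX
        exact huX.2 (mem_biUnion.2 ⟨j, mem_univ _, hmem⟩)
      exact ⟨⟨huU, hug⟩, huN huX⟩
    have h2 : (X \ N j).card ≤ DcntF E U (wf j) (g j) := card_le_card hsub
    have h3 := hg3 j
    have h4 : (X \ N j).card = X.card - (N j).card := card_sdiff_of_subset (hNX j)
    have h5 : (N j).card ≤ X.card := card_le_card (hNX j)
    have c1 : ((X.card - (N j).card : ℕ) : ℝ) ≤ (DcntF E U (wf j) (g j) : ℝ) := by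
      rw [← h4]; exact_mod_cast h2
    rw [Nat.cast_sub h5] at c1
    have c2 : 12 * (DcntF E U (wf j) (g j) : ℝ) ≤ (m : ℝ) := by exact_mod_cast h3
    linarith
  have hHall : ∀ s : Finset (Fin m), s.card ≤ (s.biUnion N).card := by
    intro s
    rcases s.eq_empty_or_nonempty with rfl | ⟨j0, hj0⟩
    · simp
    · have hsub : N j0 ⊆ s.biUnion N := fun x hx => mem_biUnion.2 ⟨j0, hj0, hx⟩
      by_cases hcase : (s.card : ℝ) ≤ (X.card:ℝ) - (m:ℝ)/12
      · have h5 : (s.card : ℝ) ≤ ((N j0).card : ℝ) := le_trans hcase (hNcard j0)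
        have h6 : s.card ≤ (N j0).card := by exact_mod_cast h5
        exact le_trans h6 (card_le_card hsub)
      · push_neg at hcase
        have hbig : s.biUnion N = X := by
          apply Subset.antisymm
          · intro x hx
            rw [mem_biUnion] at hx
            obtain ⟨j, _, hj⟩ := hx
            exact hNX j hj
          · intro u hu
            by_contra hnot
            have hblock : ∀ j ∈ s, u ∉ g j ∧ edgeF (wf j) u (g j) ∉ E := by
              intro j hj
              have hun : u ∉ N j := fun hmem => hnot (mem_biUnion.2 ⟨j, hj, hmem⟩)
              rw [hN, mem_filter] at hun
              push_neg at hun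
              constructor
              · intro hmem
                rw [hX, mem_sdiff] at hu
                exact hu.2 (mem_biUnion.2 ⟨j, mem_univ _, hmem⟩)
              · exact hun hu
            have hL : s.card ≤ LcntF E wf g m u := by
              unfold LcntF
              apply card_le_card
              intro j hj
              rw [mem_filter]
              exact ⟨mem_univ _, j.isLt, (hblock j hj).1, (hblock j hj).2⟩
            have hLu := hload u (hXU hu)
            have hXmR : (m:ℝ) ≤ (X.card:ℝ) := by exact_mod_cast hXm
            have hsR : (s.card : ℝ) ≤ ((LcntF E wf g m u : ℕ) : ℝ) := by exact_mod_cast hL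
            linarith
        rw [hbig]
        calc s.card ≤ m := by
              have h9 := card_le_univ s
              rwa [Fintype.card_fin] at h9
          _ ≤ X.card := hXm
  obtain ⟨f, hfInj, hfN⟩ := (Finset.all_card_le_biUnion_card_iff_exists_injective N).1 hHall
  have hfX : ∀ j, f j ∈ X := fun j => (hNX j) (hfN j)
  have hfE : ∀ j, edgeF (wf j) (f j) (g j) ∈ E := by
    intro j
    have h9 := hfN j
    rw [hN, mem_filter] at h9
    exact h9.2
  have hfU : ∀ j, f j ∈ U := fun j => hXU (hfX j)
  have hfng : ∀ j j', f j ∉ g j' := by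
    intro j j' hmem
    have h9 := hfX j
    rw [hX, mem_sdiff] at h9
    exact h9.2 (mem_biUnion.2 ⟨j', mem_univ _, hmem⟩)
  have hwfng : ∀ j j', wf j ∉ g j' := fun j j' hmem => hUW _ (hg1 j' hmem) (hwfW j)
  have hwfnf : ∀ j j', wf j ≠ f j' := by
    intro j j' h
    exact hUW _ (hfU j') (h ▸ hwfW j)
  refine ⟨(univ : Finset (Fin m)).image (fun j => edgeF (wf j) (f j) (g j)), ?_, ?_, ?_⟩
  · intro e he
    rw [mem_image] at he
    obtain ⟨j, _, rfl⟩ := he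
    exact hfE j
  · intro e he e' he' hne
    rw [mem_image] at he he'
    obtain ⟨j, _, rfl⟩ := he
    obtain ⟨j', _, rfl⟩ := he'
    have hjj : j ≠ j' := by
      intro h
      exact hne (by rw [h])
    rw [disjoint_left]
    intro x hx hx'
    simp only [edgeF, mem_insert] at hx hx'
    rcases hx with rfl | rfl | hxg
    · rcases hx' with h | h | h
      · exact hjj (hwfInj h)
      · exact hwfnf j j' h
      · exact hwfng j j' h
    · rcases hx' with h | h | h
      · exact hwfnf j' j h.symm
      · exact hjj (hfInj h)
      · exact hfng j j' h
    · rcases hx' with h | h | h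
      · exact hwfng j' j (h ▸ hxg)
      · exact hfng j' j (h ▸ hxg)
      · exact (disjoint_left.1 (hg4 j j' hjj)) hxg h
  · have hinj : Set.InjOn (fun j => edgeF (wf j) (f j) (g j))
        ((univ : Finset (Fin m)) : Set (Fin m)) := by
      intro j _ j' _ hEq
      simp only at hEq
      by_contra hne
      have hmemw : wf j ∈ edgeF (wf j') (f j') (g j') := by
        rw [← hEq]
        exact mem_insert_self _ _
      simp only [edgeF, mem_insert] at hmemw
      rcases hmemw with h | h | h
      · exact hne (hwfInj h)
      · exact hwfnf j j' h
      · exact hwfng j j' h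
    rw [card_image_of_injOn hinj, card_univ, Fintype.card_fin]
end
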